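/- arXiv:1510.02526 — 6 statements merged into one kernel-verified Lean document; each statement's English description precedes it below -/
import Mathlib

section
/- Let C be a cycle of length 2k and P a path with E(C) ∩ E(P) = ∅ whose end vertices lie in V(C). If H = C ∪ P has girth at least 2k−2 and P contains a vertex of C as an internal vertex, then P has length at least 2k−3. -/
open SimpleGraph Walk List

section helpers

variable {V : Type*} {H : SimpleGraph V} [DecidableEq V]

/-- In a non-nil closed walk, every support vertex lies in the tail of the support. -/
lemma mem_tail_of_closed {c : V} {w : H.Walk c c} (hw : ¬ w.Nil) {z : V}
    (hz : z ∈ w.support) : z ∈ w.support.tail := by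
  cases w with
  | nil => simp at hw
  | cons h q =>
    simp only [Walk.support_cons, List.tail_cons]
    rcases (by simpa using hz) with hz | hz
    · subst hz; exact q.end_mem_support
    · exact hz

/-- Splitting a cycle at a vertex distinct from its base yields two paths. -/
lemma cycle_split_isPath {u z : V} (w : H.Walk u u) (hw : w.IsCycle) (hz : z ∈ w.support)
    (hzu : z ≠ u) :
    (w.takeUntil z hz).IsPath ∧ (w.dropUntil z hz).IsPath := by
  set A := w.takeUntil z hz with hA
  set B := w.dropUntil z hz with hB
  have hspec : A.append B = w := w.take_spec hz
  have hsupp : w.support = A.support ++ B.support.tail := by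
    conv_lhs => rw [← hspec]
    exact A.support_append B
  have htail : w.support.tail = A.support.tail ++ B.support.tail := by
    have := congrArg List.tail hsupp
    rwa [A.support_eq_cons, w.support_eq_cons] at this
  have hnd : (A.support.tail ++ B.support.tail).Nodup := htail ▸ hw.support_nodup
  rw [List.nodup_append] at hnd
  obtain ⟨hndA, hndB, hdisj⟩ := hnd
  constructor
  · apply Walk.IsPath.mk'
    rw [A.support_eq_cons]
    refine List.nodup_cons.mpr ⟨fun hmem => ?_, hndA⟩
    have huB : u ∈ B.support.tail := end_mem_tail_support_of_ne hzu B
    exact hdisj u hmem u huB rfl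
  · apply Walk.IsPath.mk'
    rw [B.support_eq_cons]
    refine List.nodup_cons.mpr ⟨fun hmem => ?_, hndB⟩
    have hzA : z ∈ A.support.tail := end_mem_tail_support_of_ne (Ne.symm hzu) A
    exact hdisj z hzA z hmem rfl

/-- Two edge-disjoint paths with the same distinct endpoints give a cycle of bounded length. -/
lemma exists_cycle_of_two_paths (n : ℕ) :
    ∀ {x y : V} (p q : H.Walk x y), p.length + q.length ≤ n → p.IsPath → q.IsPath →
      (∀ e ∈ p.edges, e ∉ q.edges) → x ≠ y →
      ∃ (a : V) (w : H.Walk a a), w.IsCycle ∧ w.length ≤ p.length + q.length := by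
  induction n using Nat.strong_induction_on with
  | _ n ih =>
    intro x y p q hn hp hq hdisj hxy
    by_cases hcase : ∀ z ∈ p.support, z ∈ q.support → z = x ∨ z = y
    · refine ⟨x, p.append q.reverse, ?_, by simp⟩
      rw [isCycle_def]
      refine ⟨⟨?_⟩, ?_, ?_⟩
      · rw [edges_append, edges_reverse]
        exact List.Nodup.append hp.isTrail.edges_nodup
          (List.nodup_reverse.mpr hq.isTrail.edges_nodup)
          (fun e hep heq => hdisj e hep (List.mem_reverse.mp heq))
      · intro hne
        apply hxy
        have h0 := congrArg Walk.length hne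
        simp only [Walk.length_append, Walk.length_reverse, Walk.length_nil] at h0
        have hp0 : p.length = 0 := by omega
        exact Walk.eq_of_length_eq_zero hp0
      · rw [tail_support_append]
        refine List.Nodup.append ?_ ?_ ?_
        · exact hp.support_nodup.sublist (List.tail_sublist _)
        · exact hq.reverse.support_nodup.sublist (List.tail_sublist _)
        · intro z hzp hzq
          have hzp' : z ∈ p.support := (p.support_eq_cons ▸ List.mem_cons_of_mem _ hzp)
          have hzq' : z ∈ q.reverse.support :=
            (q.reverse.support_eq_cons ▸ List.mem_cons_of_mem _ hzq)
          have hzx : z ≠ x := by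
            intro h; subst h
            have := hp.support_nodup
            rw [p.support_eq_cons] at this
            exact (List.nodup_cons.mp this).1 hzp
          have hzy : z ≠ y := by
            intro h; subst h
            have := hq.reverse.support_nodup
            rw [q.reverse.support_eq_cons] at this
            exact (List.nodup_cons.mp this).1 hzq
          rcases hcase z hzp' (by rwa [support_reverse, List.mem_reverse] at hzq') with h | h
          · exact hzx h
          · exact hzy h
    · push_neg at hcase
      obtain ⟨z, hzp, hzq, hzx, hzy⟩ := hcase
      set p1 := p.takeUntil z hzp with hp1
      set q1 := q.takeUntil z hzq with hq1
      have hp1len : p1.length + (p.dropUntil z hzp).length = p.length := by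
        have := congrArg Walk.length (p.take_spec hzp)
        rwa [Walk.length_append] at this
      have hdz : 1 ≤ (p.dropUntil z hzp).length := by
        by_contra h
        have h0 : (p.dropUntil z hzp).length = 0 := by omega
        exact hzy (Walk.eq_of_length_eq_zero h0)
      have hq1le : q1.length ≤ q.length := q.length_takeUntil_le hzq
      have hlt : p1.length + q1.length < n := by omega
      obtain ⟨a, w, hw, hwlen⟩ := ih _ hlt p1 q1 le_rfl (hp.takeUntil hzp) (hq.takeUntil hzq)
        (fun e hep heq => hdisj e (p.edges_takeUntil_subset hzp hep)
          (q.edges_takeUntil_subset hzq heq)) (Ne.symm hzx)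
      exact ⟨a, w, hw, by omega⟩

end helpers

/-- The union of two walks' edge sets, as a simple graph on the same vertex type. -/
def unionGraph {V : Type*} {G : SimpleGraph V} {a b c d : V}
    (C : G.Walk a b) (P : G.Walk c d) : SimpleGraph V :=
  SimpleGraph.fromEdgeSet ({e | e ∈ C.edges} ∪ {e | e ∈ P.edges})

/-- If `C` is a cycle of length `2k`, `P` is a path edge-disjoint from
`C` with end vertices on `C`, `H = C ∪ P` has girth at least `2k-2`, and `P`
contains a vertex of `C` as an internal vertex, then `P` has length
at least `2k-3`. -/
theorem stmt2 {V : Type*} (k : ℕ) (hk : 3 ≤ k) (G : SimpleGraph V)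
    {c u v : V} (C : G.Walk c c) (P : G.Walk u v)
    (hC : C.IsCycle) (hClen : C.length = 2 * k)
    (hP : P.IsPath)
    (hu : u ∈ C.support) (hv : v ∈ C.support)
    (hdisj : ∀ e ∈ C.edges, e ∉ P.edges)
    (hgirth : ((2 * k - 2 : ℕ) : ℕ∞) ≤ (unionGraph C P).girth)
    (hint : ∃ z, z ∈ C.support ∧ z ∈ P.support ∧ z ≠ u ∧ z ≠ v) :
    2 * k - 3 ≤ P.length := by
  classical
  obtain ⟨z, hzC, hzP, hzu, hzv⟩ := hint
  -- u ≠ v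
  have huv : u ≠ v := by
    intro h
    subst h
    cases P with
    | nil => exact hzu (by simpa using hzP)
    | cons ha q =>
      rw [Walk.cons_isPath_iff] at hP
      exact hP.2 q.end_mem_support
  set H := unionGraph C P with hH
  have hCE : ∀ e ∈ C.edges, e ∈ H.edgeSet := by
    intro e he
    rw [hH, unionGraph, edgeSet_fromEdgeSet]
    exact ⟨Or.inl he, G.not_isDiag_of_mem_edgeSet (C.edges_subset_edgeSet he)⟩
  have hPE : ∀ e ∈ P.edges, e ∈ H.edgeSet := by
    intro e he
    rw [hH, unionGraph, edgeSet_fromEdgeSet]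
    exact ⟨Or.inr he, G.not_isDiag_of_mem_edgeSet (P.edges_subset_edgeSet he)⟩
  set C' := C.transfer H hCE with hC'def
  set P' := P.transfer H hPE with hP'def
  have hC' : C'.IsCycle := hC.transfer _
  have hP' : P'.IsPath := hP.transfer _
  -- girth bound on cycles of H
  have hcyc : ∀ (a : V) (w : H.Walk a a), w.IsCycle → 2 * k - 2 ≤ w.length := by
    intro a w hw
    have h1 : H.egirth ≤ (w.length : ℕ∞) := le_egirth.mp le_rfl a w hw
    have h2 : H.girth ≤ w.length := by
      have := ENat.toNat_le_toNat h1 (by simp)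
      simpa [SimpleGraph.girth] using this
    have h3 : 2 * k - 2 ≤ H.girth := by exact_mod_cast hgirth
    omega
  have bound : ∀ {x y : V} (p q : H.Walk x y), p.IsPath → q.IsPath →
      (∀ e ∈ p.edges, e ∈ P.edges) → (∀ e ∈ q.edges, e ∈ C.edges) → x ≠ y →
      2 * k - 2 ≤ p.length + q.length := by
    intro x y p q hp hq hpe hqe hxy
    obtain ⟨a, w, hw, hwlen⟩ := exists_cycle_of_two_paths (p.length + q.length) p q le_rfl hp hq
      (fun e hep heq => hdisj e (hqe e heq) (hpe e hep)) hxy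
    have := hcyc a w hw
    omega
  -- rotate C' at u
  have hu' : u ∈ C'.support := by rw [hC'def, Walk.support_transfer]; exact hu
  set Cu := C'.rotate u hu' with hCudef
  have hCu : Cu.IsCycle := hC'.rotate hu'
  have hCuE : ∀ e ∈ Cu.edges, e ∈ C.edges := by
    intro e he
    have h1 : e ∈ C'.edges := ((C'.rotate_edges u hu').perm.mem_iff).mp he
    rwa [hC'def, Walk.edges_transfer] at h1
  have hCulen : Cu.length = 2 * k := by
    have h := (C'.rotate_edges u hu').perm.length_eq
    rw [Walk.length_edges, Walk.length_edges] at h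
    rw [h, hC'def, Walk.length_transfer, hClen]
  have hmemCu : ∀ x ∈ C.support, x ∈ Cu.support := by
    intro x hx
    have hx0 : x ∈ C'.support := by rw [hC'def, Walk.support_transfer]; exact hx
    have hx' : x ∈ C'.support.tail := mem_tail_of_closed hC'.isCircuit.not_nil hx0
    have hx2 : x ∈ Cu.support.tail := ((support_rotate C' u hu').perm.mem_iff).mpr hx'
    rw [Cu.support_eq_cons]
    exact List.mem_cons_of_mem _ hx2
  have hzCu : z ∈ Cu.support := hmemCu z hzC
  have hvCu : v ∈ Cu.support := hmemCu v hv
  -- split the cycle at z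
  set A := Cu.takeUntil z hzCu with hAdef
  set B := Cu.dropUntil z hzCu with hBdef
  obtain ⟨hApath, hBpath⟩ := cycle_split_isPath Cu hCu hzCu hzu
  have hABlen : A.length + B.length = 2 * k := by
    have := congrArg Walk.length (Cu.take_spec hzCu)
    rw [Walk.length_append, ← hAdef, ← hBdef] at this
    omega
  have hA1 : 1 ≤ A.length := by
    by_contra h
    have h0 : A.length = 0 := by omega
    exact hzu (Walk.eq_of_length_eq_zero h0).symm
  have hB1 : 1 ≤ B.length := by
    by_contra h
    have h0 : B.length = 0 := by omega
    exact hzu (Walk.eq_of_length_eq_zero h0)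
  have hAe : ∀ e ∈ A.edges, e ∈ C.edges := fun e he =>
    hCuE e (Cu.edges_takeUntil_subset hzCu he)
  have hBe : ∀ e ∈ B.edges, e ∈ C.edges := fun e he =>
    hCuE e (Cu.edges_dropUntil_subset hzCu he)
  -- tail decomposition of the cycle
  have htails : Cu.support.tail = A.support.tail ++ B.support.tail := by
    have hsupp : Cu.support = A.support ++ B.support.tail := by
      conv_lhs => rw [← Cu.take_spec hzCu]
      exact A.support_append B
    have := congrArg List.tail hsupp
    rwa [A.support_eq_cons, Cu.support_eq_cons] at this
  have hdisjAB : ∀ x ∈ A.support.tail, x ∉ B.support.tail := by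
    have := hCu.support_nodup
    rw [htails, List.nodup_append] at this
    exact fun x hx hxB => this.2.2 x hx x hxB rfl
  -- split the path P' at z
  have hzP' : z ∈ P'.support := by rw [hP'def, Walk.support_transfer]; exact hzP
  set P1 := P'.takeUntil z hzP' with hP1def
  set P2 := P'.dropUntil z hzP' with hP2def
  have hP1path : P1.IsPath := hP'.takeUntil hzP'
  have hP2path : P2.IsPath := hP'.dropUntil hzP'
  have hPlen : P1.length + P2.length = P.length := by
    have := congrArg Walk.length (P'.take_spec hzP')
    rw [Walk.length_append] at this
    rw [this, hP'def, Walk.length_transfer]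
  have hP1e : ∀ e ∈ P1.edges, e ∈ P.edges := by
    intro e he
    have := P'.edges_takeUntil_subset hzP' he
    rwa [hP'def, Walk.edges_transfer] at this
  have hP2e : ∀ e ∈ P2.edges, e ∈ P.edges := by
    intro e he
    have := P'.edges_dropUntil_subset hzP' he
    rwa [hP'def, Walk.edges_transfer] at this
  -- bounds for the u-z pair
  have b1 : 2 * k - 2 ≤ P1.length + A.length :=
    bound P1 A hP1path hApath hP1e hAe (Ne.symm hzu)
  have b2 : 2 * k - 2 ≤ P1.length + B.length := by
    have := bound P1 B.reverse hP1path hBpath.reverse hP1e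
      (fun e he => hBe e (by rwa [Walk.edges_reverse, List.mem_reverse] at he)) (Ne.symm hzu)
    rwa [Walk.length_reverse] at this
  -- bounds for the z-v pair: split on where v lies
  have hvAB : v ∈ A.support ∨ v ∈ B.support := by
    have : v ∈ (A.append B).support := by rw [Cu.take_spec hzCu]; exact hvCu
    exact (mem_support_append_iff A B).mp this
  rcases hvAB with hvA | hvB
  · -- v on the arc A from u to z
    set A1 := A.takeUntil v hvA with hA1def
    set A2 := A.dropUntil v hvA with hA2def
    have hA1path : A1.IsPath := hApath.takeUntil hvA
    have hA2path : A2.IsPath := hApath.dropUntil hvA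
    have hA12 : A1.length + A2.length = A.length := by
      have := congrArg Walk.length (A.take_spec hvA)
      rw [Walk.length_append, ← hA1def, ← hA2def] at this
      omega
    have ht1 : 1 ≤ A1.length := by
      by_contra h
      have h0 : A1.length = 0 := by omega
      exact huv (Walk.eq_of_length_eq_zero h0)
    have hd1 : 1 ≤ A2.length := by
      by_contra h
      have h0 : A2.length = 0 := by omega
      exact hzv (Walk.eq_of_length_eq_zero h0).symm
    have hA1e : ∀ e ∈ A1.edges, e ∈ C.edges := fun e he =>
      hAe e (A.edges_takeUntil_subset hvA he)
    have hA2e : ∀ e ∈ A2.edges, e ∈ C.edges := fun e he =>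
      hAe e (A.edges_dropUntil_subset hvA he)
    have b3 : 2 * k - 2 ≤ P2.length + A2.length := by
      have := bound P2 A2.reverse hP2path hA2path.reverse hP2e
        (fun e he => hA2e e (by rwa [Walk.edges_reverse, List.mem_reverse] at he)) hzv
      rwa [Walk.length_reverse] at this
    -- the other z-v arc: B followed by A1
    have hA1tail_sub : ∀ x ∈ A1.support.tail, x ∈ A.support.tail := by
      intro x hx
      have hxA : x ∈ A.support := A.support_takeUntil_subset hvA
          (A1.support_eq_cons ▸ List.mem_cons_of_mem _ hx)
      have hxu : x ≠ u := by
        intro h; subst h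
        have hnd := hA1path.support_nodup
        rw [A1.support_eq_cons] at hnd
        exact (List.nodup_cons.mp hnd).1 hx
      rw [A.support_eq_cons] at hxA
      rcases List.mem_cons.mp hxA with h | h
      · exact absurd h hxu
      · exact h
    have hzA1 : z ∉ A1.support.tail := by
      intro hmem
      have hnd := hApath.support_nodup
      have hsupp : A.support = A1.support ++ A2.support.tail := by
        conv_lhs => rw [← A.take_spec hvA]
        exact A1.support_append A2
      rw [hsupp, List.nodup_append] at hnd
      have hz2 : z ∈ A2.support.tail := end_mem_tail_support_of_ne (Ne.symm hzv) A2
      exact hnd.2.2 z ((A1.support_eq_cons ▸ List.mem_cons_of_mem _ hmem)) z hz2 rfl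
    have hWpath : (B.append A1).IsPath := by
      apply Walk.IsPath.mk'
      rw [B.support_append A1]
      refine List.Nodup.append hBpath.support_nodup
        (hA1path.support_nodup.sublist (List.tail_sublist _)) ?_
      intro x hxB hxA1
      have hxA : x ∈ A.support.tail := hA1tail_sub x hxA1
      rw [B.support_eq_cons] at hxB
      rcases List.mem_cons.mp hxB with h | h
      · exact hzA1 (h ▸ hxA1)
      · exact hdisjAB x hxA h
    have b4 : 2 * k - 2 ≤ P2.length + (B.length + A1.length) := by
      have := bound P2 (B.append A1) hP2path hWpath hP2e
        (fun e he => by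
          rcases List.mem_append.mp (by rwa [Walk.edges_append] at he) with h | h
          · exact hBe e h
          · exact hA1e e h) hzv
      rwa [Walk.length_append] at this
    omega
  · -- v on the arc B from z to u
    set B1 := B.takeUntil v hvB with hB1def
    set B2 := B.dropUntil v hvB with hB2def
    have hB1path : B1.IsPath := hBpath.takeUntil hvB
    have hB2path : B2.IsPath := hBpath.dropUntil hvB
    have hB12 : B1.length + B2.length = B.length := by
      have := congrArg Walk.length (B.take_spec hvB)
      rw [Walk.length_append, ← hB1def, ← hB2def] at this
      omega
    have hs1 : 1 ≤ B1.length := by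
      by_contra h
      have h0 : B1.length = 0 := by omega
      exact hzv (Walk.eq_of_length_eq_zero h0)
    have he1 : 1 ≤ B2.length := by
      by_contra h
      have h0 : B2.length = 0 := by omega
      exact huv (Walk.eq_of_length_eq_zero h0).symm
    have hB1e : ∀ e ∈ B1.edges, e ∈ C.edges := fun e he =>
      hBe e (B.edges_takeUntil_subset hvB he)
    have hB2e : ∀ e ∈ B2.edges, e ∈ C.edges := fun e he =>
      hBe e (B.edges_dropUntil_subset hvB he)
    have b3 : 2 * k - 2 ≤ P2.length + B1.length :=
      bound P2 B1 hP2path hB1path hP2e hB1e hzv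
    -- the other z-v arc: B2 followed by A, reversed
    have hB2tail_sub : ∀ x ∈ B2.support.tail, x ∈ B.support.tail := by
      intro x hx
      have hxB : x ∈ B.support := B.support_dropUntil_subset hvB
          (B2.support_eq_cons ▸ List.mem_cons_of_mem _ hx)
      have hxz : x ≠ z := by
        intro h; subst h
        have hnd := hBpath.support_nodup
        have hsupp : B.support = B1.support ++ B2.support.tail := by
          conv_lhs => rw [← B.take_spec hvB]
          exact B1.support_append B2
        rw [hsupp, List.nodup_append] at hnd
        exact hnd.2.2 _ B1.start_mem_support _ hx rfl
      rw [B.support_eq_cons] at hxB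
      rcases List.mem_cons.mp hxB with h | h
      · exact absurd h hxz
      · exact h
    have hvB' : v ∈ B.support.tail := by
      rw [B.support_eq_cons] at hvB
      rcases List.mem_cons.mp hvB with h | h
      · exact absurd h.symm hzv
      · exact h
    have hWpath : (B2.append A).IsPath := by
      apply Walk.IsPath.mk'
      rw [B2.support_append A]
      refine List.Nodup.append hB2path.support_nodup
        (hApath.support_nodup.sublist (List.tail_sublist _)) ?_
      intro x hxB2 hxA
      rw [B2.support_eq_cons] at hxB2
      rcases List.mem_cons.mp hxB2 with h | h
      · subst h
        exact hdisjAB x hxA hvB'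
      · exact hdisjAB x hxA (hB2tail_sub x h)
    have b4 : 2 * k - 2 ≤ P2.length + (B2.length + A.length) := by
      have := bound P2 (B2.append A).reverse hP2path hWpath.reverse hP2e
        (fun e he => by
          rw [Walk.edges_reverse, List.mem_reverse, Walk.edges_append] at he
          rcases List.mem_append.mp he with h | h
          · exact hB2e e h
          · exact hAe e h) hzv
      rwa [Walk.length_reverse, Walk.length_append] at this
    omega
end

section
/- Let k ≥ 3, and let C and C′ be two cycles, each of length 2k, such that E(C) ∩ E(C′) = ∅ and V(C) ∩ V(C′) ≠ ∅. If H = C ∪ C′ has girth at least 2k−2, then the edge set of H can be partitioned into two paths, each of length 2k. -/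
open SimpleGraph

namespace Stmt6Aux

variable {V : Type*} {H : SimpleGraph V}

lemma length_rotate' [DecidableEq V] {v u : V} (c : H.Walk v v) (h : u ∈ c.support) :
    (c.rotate u h).length = c.length := by
  have h1 := congrArg Walk.length (c.take_spec h)
  rw [Walk.length_append] at h1
  rw [Walk.rotate, Walk.length_append]
  omega

lemma mem_support_tail_iff {v : V} (w : H.Walk v v) (h0 : ¬ w.Nil) (z : V) :
    z ∈ w.support.tail ↔ z ∈ w.support := by
  obtain ⟨y, h, t, rfl⟩ := Walk.not_nil_iff.mp h0
  simp only [Walk.support_cons, List.tail_cons, List.mem_cons]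
  constructor
  · exact fun h => Or.inr h
  · rintro (rfl | h)
    · exact t.end_mem_support
    · exact h

lemma mem_support_rotate [DecidableEq V] {v u : V} (c : H.Walk v v) (h0 : ¬ c.Nil)
    (h : u ∈ c.support) (z : V) : z ∈ (c.rotate u h).support ↔ z ∈ c.support := by
  have hrot : ¬ (c.rotate u h).Nil := by
    rw [Walk.not_nil_iff_lt_length, length_rotate']
    exact Walk.not_nil_iff_lt_length.mp h0
  rw [← mem_support_tail_iff _ hrot, ← mem_support_tail_iff _ h0,
    (Walk.support_rotate c u h).perm.mem_iff]

lemma IsCycle.rev {v : V} {w : H.Walk v v} (h : w.IsCycle) : w.reverse.IsCycle := by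
  obtain ⟨y, hadj, t, rfl⟩ := Walk.not_nil_iff.mp h.not_nil
  obtain ⟨u0, q, hadj', hcq⟩ := Walk.exists_cons_eq_concat hadj t
  rw [Walk.isCycle_def] at h ⊢
  obtain ⟨htrail, -, hnodup⟩ := h
  refine ⟨Walk.IsTrail.reverse _ htrail, ?_, ?_⟩
  · rw [hcq, Walk.reverse_concat]
    exact fun hc => by simp at hc
  · rw [hcq, Walk.reverse_concat, Walk.support_cons, List.tail_cons, Walk.support_reverse,
      List.nodup_reverse]
    rw [hcq, Walk.concat_eq_append, Walk.support_append] at hnodup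
    rw [q.support_eq_cons] at hnodup ⊢
    simp only [Walk.support_cons, Walk.support_nil, List.tail_cons, List.nodup_cons,
      List.cons_append] at hnodup ⊢
    rw [List.nodup_append'] at hnodup
    obtain ⟨h1, -, h3⟩ := hnodup
    exact ⟨fun hc => h3 hc (by simp), h1⟩

/-- A closed trail of positive length contains a cycle of length at most its own length. -/
lemma trail_contains_cycle [DecidableEq V] :
    ∀ (n : ℕ) {v : V} (w : H.Walk v v), w.IsTrail → 0 < w.length → w.length ≤ n →
      ∃ (u : V) (c : H.Walk u u), c.IsCycle ∧ c.length ≤ w.length := by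
  intro n
  induction n with
  | zero => intro v w _ h0 hn; omega
  | succ n ih =>
    intro v w hw h0 hn
    by_cases hsn : w.support.tail.Nodup
    · refine ⟨v, w, ?_, le_rfl⟩
      rw [Walk.isCycle_def]
      refine ⟨hw, ?_, hsn⟩
      intro hnil
      rw [hnil] at h0
      simp at h0
    · obtain ⟨z, hz⟩ := List.exists_duplicate_iff_not_nodup.mpr hsn
      have hzcount : 2 ≤ w.support.tail.count z := List.duplicate_iff_two_le_count.mp hz
      have hzmem : z ∈ w.support := by
        rw [← mem_support_tail_iff w (Walk.not_nil_iff_lt_length.mpr h0)]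
        exact hz.mem
      have hw' : (w.rotate z hzmem).IsTrail := hw.rotate hzmem
      have hlen' : (w.rotate z hzmem).length = w.length := length_rotate' w hzmem
      have hcount' : 2 ≤ (w.rotate z hzmem).support.tail.count z := by
        rwa [(Walk.support_rotate w z hzmem).perm.count_eq]
      have hnil' : ¬ (w.rotate z hzmem).Nil := by
        rw [Walk.not_nil_iff_lt_length, hlen']; exact h0
      obtain ⟨y, hadj, t, ht⟩ := Walk.not_nil_iff.mp hnil'
      rw [ht, Walk.support_cons, List.tail_cons] at hcount'
      have hzt : z ∈ t.support := by
        by_contra hzt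
        rw [List.count_eq_zero_of_not_mem hzt] at hcount'
        omega
      rw [ht] at hw' hlen'
      rw [Walk.isTrail_cons] at hw'
      obtain ⟨htt, het⟩ := hw'
      have hc : (Walk.cons hadj (t.takeUntil z hzt)).IsTrail := by
        rw [Walk.isTrail_cons]
        exact ⟨htt.takeUntil hzt, fun hc => het (t.edges_takeUntil_subset hzt hc)⟩
      have hts := congrArg Walk.length (t.take_spec hzt)
      rw [Walk.length_append] at hts
      have hcount1 : (t.takeUntil z hzt).support.count z = 1 :=
        t.count_support_takeUntil_eq_one hzt
      have hsplit : t.support = (t.takeUntil z hzt).support ++ (t.dropUntil z hzt).support.tail := by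
        conv_lhs => rw [← t.take_spec hzt]
        rw [Walk.support_append]
      have hdc : 1 ≤ ((t.dropUntil z hzt).support.tail).count z := by
        rw [hsplit, List.count_append, hcount1] at hcount'
        omega
      have hdrop_pos : 0 < (t.dropUntil z hzt).length := by
        have h2 := (t.dropUntil z hzt).length_support
        have h3 : (t.dropUntil z hzt).support.tail ≠ [] := by
          intro hcontra
          rw [hcontra] at hdc
          simp at hdc
        have h4 : 0 < (t.dropUntil z hzt).support.tail.length := List.length_pos_iff.mpr h3
        rw [List.length_tail, h2] at h4
        omega
      have htklt : (t.takeUntil z hzt).length < t.length := by omega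
      have hwlen : w.length = t.length + 1 := by
        rw [← hlen', Walk.length_cons]
      obtain ⟨u, c, hcyc, hclen⟩ := ih (Walk.cons hadj (t.takeUntil z hzt)) hc (by
          rw [Walk.length_cons]; omega) (by rw [Walk.length_cons]; omega)
      exact ⟨u, c, hcyc, by rw [Walk.length_cons] at hclen; omega⟩

/-- If any cycle of `H` has length at least `g`, then any closed trail of positive length
has length at least `g`. -/
lemma closed_trail_bound [DecidableEq V] {g : ℕ}
    (hgirth : ∀ (u : V) (c : H.Walk u u), c.IsCycle → g ≤ c.length)
    {v : V} (w : H.Walk v v) (hw : w.IsTrail) (h0 : 0 < w.length) : g ≤ w.length := by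
  obtain ⟨u, c, hcyc, hle⟩ := trail_contains_cycle w.length w hw h0 le_rfl
  exact le_trans (hgirth u c hcyc) hle

/-- If `x` is adjacent to `a` via an edge not belonging to the `2k`-cycle `E`, while
`a` lies on `E`, then (girth being at least `2k-2`) `a` is at position 3 on `E`. -/
lemma arc_eq [DecidableEq V] {k : ℕ} (hk : 3 ≤ k)
    (hgirth : ∀ (u : V) (c : H.Walk u u), c.IsCycle → 2 * k - 2 ≤ c.length)
    {x a : V} (E : H.Walk x x) (hE : E.IsCycle) (hElen : E.length = 2 * k)
    (hadj : H.Adj x a) (hmem : a ∈ E.support) (hne : s(x, a) ∉ E.edges) :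
    E.getVert 3 = a := by
  have hEtrail : E.IsTrail := hE.isCircuit.isTrail
  have hPQ : (E.takeUntil a hmem).length + (E.dropUntil a hmem).length = 2 * k := by
    have := congrArg Walk.length (E.take_spec hmem)
    rw [Walk.length_append] at this
    omega
  -- first closed trail : P followed by the edge a-x
  have hw1 : ((E.takeUntil a hmem).concat hadj.symm).IsTrail := by
    rw [Walk.concat_eq_append, Walk.isTrail_def, Walk.edges_append]
    have hPnodup : (E.takeUntil a hmem).edges.Nodup := (hEtrail.takeUntil hmem).edges_nodup
    have hPe : s(a, x) ∉ (E.takeUntil a hmem).edges := by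
      rw [Sym2.eq_swap]
      exact fun hc => hne (E.edges_takeUntil_subset hmem hc)
    simp only [Walk.edges_cons, Walk.edges_nil]
    rw [List.nodup_append']
    refine ⟨hPnodup, by simp, ?_⟩
    intro e he1 he2
    simp only [List.mem_singleton] at he2
    subst he2
    exact hPe he1
  have hb1 : 2 * k - 2 ≤ ((E.takeUntil a hmem).concat hadj.symm).length := by
    apply closed_trail_bound hgirth _ hw1
    rw [Walk.length_concat]
    omega
  rw [Walk.length_concat] at hb1
  -- second closed trail : the edge x-a followed by Q
  have hw2 : (Walk.cons hadj (E.dropUntil a hmem)).IsTrail := by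
    rw [Walk.isTrail_cons]
    exact ⟨hEtrail.dropUntil hmem, fun hc => hne (E.edges_dropUntil_subset hmem hc)⟩
  have hb2 : 2 * k - 2 ≤ (Walk.cons hadj (E.dropUntil a hmem)).length := by
    apply closed_trail_bound hgirth _ hw2
    rw [Walk.length_cons]
    omega
  rw [Walk.length_cons] at hb2
  -- hence P has length exactly 3
  have hP3 : (E.takeUntil a hmem).length = 3 := by omega
  have h4 := E.take_spec hmem
  have h5 : ((E.takeUntil a hmem).append (E.dropUntil a hmem)).getVert
      (E.takeUntil a hmem).length = a := by
    rw [Walk.getVert_append]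
    simp
  rw [h4] at h5
  rwa [hP3] at h5

/-- The first edge of a non-nil walk. -/
lemma first_edge_mem {x y : V} (D : H.Walk x y) (hnil : ¬ D.Nil) :
    D.edges = s(x, D.getVert 1) :: D.tail.edges := by
  conv_lhs => rw [← Walk.cons_tail_eq D hnil, Walk.edges_cons]

/-- Key lemma : for a vertex `x` on both cycles, one of its two `D`-neighbours does not lie
on `E`. -/
lemma good_neighbor [DecidableEq V] {k : ℕ} (hk : 3 ≤ k)
    (hgirth : ∀ (u : V) (c : H.Walk u u), c.IsCycle → 2 * k - 2 ≤ c.length)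
    {x : V} (D E : H.Walk x x) (hD : D.IsCycle) (hE : E.IsCycle)
    (hDlen : D.length = 2 * k) (hElen : E.length = 2 * k)
    (hdisj : ∀ e ∈ D.edges, e ∉ E.edges) :
    D.getVert 1 ∉ E.support ∨ D.reverse.getVert 1 ∉ E.support := by
  by_contra hcon
  push_neg at hcon
  obtain ⟨h1, h2⟩ := hcon
  have hnil : ¬ D.Nil := hD.not_nil
  have hnilrev : ¬ D.reverse.Nil := by
    rw [Walk.not_nil_iff_lt_length, Walk.length_reverse]
    exact Walk.not_nil_iff_lt_length.mp hnil
  -- the two first edges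
  have hD1 := first_edge_mem D hnil
  have hD2 := first_edge_mem D.reverse hnilrev
  have he1 : s(x, D.getVert 1) ∈ D.edges := by rw [hD1]; exact List.mem_cons_self
  have he2 : s(x, D.reverse.getVert 1) ∈ D.edges := by
    have : s(x, D.reverse.getVert 1) ∈ D.reverse.edges := by
      rw [hD2]; exact List.mem_cons_self
    rwa [Walk.edges_reverse, List.mem_reverse] at this
  have ha1 : E.getVert 3 = D.getVert 1 :=
    arc_eq hk hgirth E hE hElen (Walk.adj_snd hnil) h1 (hdisj _ he1)
  have ha2 : E.getVert 3 = D.reverse.getVert 1 :=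
    arc_eq hk hgirth E hE hElen (Walk.adj_snd hnilrev) h2 (hdisj _ he2)
  -- so the two neighbours coincide, and the first and last edges of D coincide
  have haa : D.getVert 1 = D.reverse.getVert 1 := by rw [← ha1, ha2]
  have heq : s(x, D.getVert 1) = s(x, D.reverse.getVert 1) := by rw [haa]
  -- derive a contradiction with Nodup of D.edges
  have hrevedges : D.reverse.edges = D.tail.edges.reverse ++ [s(x, D.getVert 1)] := by
    rw [Walk.edges_reverse, hD1]
    simp
  have htne : D.tail.edges.reverse ≠ [] := by
    have : D.tail.edges.length = D.tail.length := D.tail.length_edges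
    have h5 : D.tail.length + 1 = D.length := Walk.length_tail_add_one hnil
    intro hcontra
    rw [List.reverse_eq_nil_iff] at hcontra
    rw [hcontra] at this
    simp at this
    omega
  obtain ⟨b, L, hbl⟩ := List.exists_cons_of_ne_nil htne
  rw [hD2, hbl] at hrevedges
  simp only [List.cons_append, List.cons.injEq] at hrevedges
  have hb : b = s(x, D.getVert 1) := hrevedges.1.symm.trans heq.symm
  have : s(x, D.getVert 1) ∈ D.tail.edges := by
    rw [← List.mem_reverse, hbl, hb]
    exact List.mem_cons_self
  have hnodup : D.edges.Nodup := hD.isCircuit.isTrail.edges_nodup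
  rw [hD1, List.nodup_cons] at hnodup
  exact hnodup.1 this

/-- The construction : given two edge-disjoint cycles of length `2k` through `x`, whose
successors after `x` avoid the other cycle, build the two paths. -/
lemma build {k : ℕ} (hk : 3 ≤ k) {x : V} (D D' : H.Walk x x)
    (hD : D.IsCycle) (hD' : D'.IsCycle)
    (hDlen : D.length = 2 * k) (hD'len : D'.length = 2 * k)
    (hdisj : ∀ e ∈ D.edges, e ∉ D'.edges)
    (ha : D.getVert 1 ∉ D'.support) (hb : D'.getVert 1 ∉ D.support) :
    ∃ (a b a' b' : V) (Q₁ : H.Walk a b) (Q₂ : H.Walk a' b'),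
      Q₁.IsPath ∧ Q₂.IsPath ∧
      Q₁.length = 2 * k ∧ Q₂.length = 2 * k ∧
      (∀ e, (e ∈ D.edges ∨ e ∈ D'.edges) ↔ (e ∈ Q₁.edges ∨ e ∈ Q₂.edges)) ∧
      (∀ e ∈ Q₁.edges, e ∉ Q₂.edges) := by
  have hnil : ¬ D.Nil := hD.not_nil
  have hnil' : ¬ D'.Nil := hD'.not_nil
  set a := D.getVert 1 with hadef
  set b := D'.getVert 1 with hbdef
  have hxa : H.Adj x a := Walk.adj_snd hnil
  have hxb : H.Adj x b := Walk.adj_snd hnil'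
  refine ⟨a, b, b, a, D.tail.append (Walk.cons hxb Walk.nil),
    D'.tail.append (Walk.cons hxa Walk.nil), ?_, ?_, ?_, ?_, ?_, ?_⟩
  -- support facts
  case _ =>
    rw [Walk.isPath_def, Walk.support_append]
    simp only [Walk.support_cons, Walk.support_nil, List.tail_cons]
    have h1 : D.tail.support.Nodup := by
      rw [Walk.support_tail_of_not_nil D hnil]
      exact hD.2
    have h2 : b ∉ D.tail.support := by
      intro hc
      apply hb
      rw [← Walk.cons_support_tail hnil]
      exact List.mem_cons_of_mem _ hc
    rw [List.nodup_append']
    refine ⟨h1, by simp, fun e he1 he2 => ?_⟩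
    rw [List.mem_singleton] at he2
    exact h2 (he2 ▸ he1)
  case _ =>
    rw [Walk.isPath_def, Walk.support_append]
    simp only [Walk.support_cons, Walk.support_nil, List.tail_cons]
    have h1 : D'.tail.support.Nodup := by
      rw [Walk.support_tail_of_not_nil D' hnil']
      exact hD'.2
    have h2 : a ∉ D'.tail.support := by
      intro hc
      apply ha
      rw [← Walk.cons_support_tail hnil']
      exact List.mem_cons_of_mem _ hc
    rw [List.nodup_append']
    refine ⟨h1, by simp, fun e he1 he2 => ?_⟩
    rw [List.mem_singleton] at he2
    exact h2 (he2 ▸ he1)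
  case _ =>
    rw [Walk.length_append]
    have := Walk.length_tail_add_one hnil
    simp only [Walk.length_cons, Walk.length_nil]
    omega
  case _ =>
    rw [Walk.length_append]
    have := Walk.length_tail_add_one hnil'
    simp only [Walk.length_cons, Walk.length_nil]
    omega
  case _ =>
    intro e
    rw [first_edge_mem D hnil, first_edge_mem D' hnil']
    rw [Walk.edges_append, Walk.edges_append]
    simp only [Walk.edges_cons, Walk.edges_nil, List.mem_cons, List.mem_append,
      List.mem_singleton, List.not_mem_nil, or_false]
    tauto
  case _ =>
    intro e he1 he2
    rw [Walk.edges_append] at he1 he2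
    simp only [Walk.edges_cons, Walk.edges_nil, List.mem_append, List.mem_singleton,
      List.not_mem_nil, or_false] at he1 he2
    have hDe := first_edge_mem D hnil
    have hD'e := first_edge_mem D' hnil'
    have hDnodup : D.edges.Nodup := hD.isCircuit.isTrail.edges_nodup
    have hD'nodup : D'.edges.Nodup := hD'.isCircuit.isTrail.edges_nodup
    rcases he1 with he1 | he1 <;> rcases he2 with he2 | he2
    · -- e in both tails
      refine hdisj e ?_ ?_
      · rw [hDe]; exact List.mem_cons_of_mem _ he1
      · rw [hD'e]; exact List.mem_cons_of_mem _ he2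
    · -- e in D.tail and e = s(x,a)
      subst he2
      rw [hDe, List.nodup_cons] at hDnodup
      exact hDnodup.1 he1
    · -- e = s(x,b) in D'.tail
      subst he1
      rw [hD'e, List.nodup_cons] at hD'nodup
      exact hD'nodup.1 he2
    · -- s(x,b) = s(x,a)
      subst he1
      have hba : b = a := Sym2.congr_right.mp he2
      apply ha
      rw [← hba]
      exact Walk.mem_support_iff_exists_getVert.mpr ⟨1, rfl, by omega⟩

end Stmt6Aux

/-- Let `k ≥ 3`, and let `C`, `C'` be edge-disjoint cycles, each of
length `2k`, sharing at least one vertex.  If `H = C ∪ C'` has girth at least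
`2k-2`, then the edge set of `H` partitions into two paths, each of length `2k`. -/
theorem stmt6 {V : Type*} (k : ℕ) (hk : 3 ≤ k) (G : SimpleGraph V)
    {c c' : V} (C : G.Walk c c) (C' : G.Walk c' c')
    (hC : C.IsCycle) (hClen : C.length = 2 * k)
    (hC' : C'.IsCycle) (hC'len : C'.length = 2 * k)
    (hdisj : ∀ e ∈ C.edges, e ∉ C'.edges)
    (hshare : ∃ x, x ∈ C.support ∧ x ∈ C'.support)
    (hgirth : ((2 * k - 2 : ℕ) : ℕ∞) ≤ (unionGraph C C').girth) :
    ∃ (a b a' b' : V) (Q₁ : (unionGraph C C').Walk a b) (Q₂ : (unionGraph C C').Walk a' b'),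
      Q₁.IsPath ∧ Q₂.IsPath ∧
      Q₁.length = 2 * k ∧ Q₂.length = 2 * k ∧
      (∀ e, e ∈ (unionGraph C C').edgeSet ↔ (e ∈ Q₁.edges ∨ e ∈ Q₂.edges)) ∧
      (∀ e ∈ Q₁.edges, e ∉ Q₂.edges) := by
  classical
  obtain ⟨x, hxC, hxC'⟩ := hshare
  set H := unionGraph C C' with hHdef
  -- edge set of H
  have hedge : ∀ e, e ∈ H.edgeSet ↔ (e ∈ C.edges ∨ e ∈ C'.edges) := by
    intro e
    rw [hHdef, unionGraph, SimpleGraph.edgeSet_fromEdgeSet]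
    constructor
    · rintro ⟨he, -⟩
      exact he
    · intro he
      refine ⟨he, ?_⟩
      rcases he with he | he
      · exact SimpleGraph.not_isDiag_of_mem_edgeSet G (C.edges_subset_edgeSet he)
      · exact SimpleGraph.not_isDiag_of_mem_edgeSet G (C'.edges_subset_edgeSet he)
  have hsubC : ∀ e ∈ C.edges, e ∈ H.edgeSet := fun e he => (hedge e).mpr (Or.inl he)
  have hsubC' : ∀ e ∈ C'.edges, e ∈ H.edgeSet := fun e he => (hedge e).mpr (Or.inr he)
  -- transfer the cycles to H
  set CH := C.transfer H hsubC with hCHdef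
  set C'H := C'.transfer H hsubC' with hC'Hdef
  have hCHcyc : CH.IsCycle := by
    rw [SimpleGraph.Walk.isCycle_def, SimpleGraph.Walk.isTrail_def]
    refine ⟨?_, ?_, ?_⟩
    · rw [SimpleGraph.Walk.edges_transfer]
      exact hC.isCircuit.isTrail.edges_nodup
    · intro hcontra
      have := congrArg SimpleGraph.Walk.length hcontra
      rw [SimpleGraph.Walk.length_transfer] at this
      simp only [SimpleGraph.Walk.length_nil] at this
      omega
    · rw [SimpleGraph.Walk.support_transfer]
      exact hC.2
  have hC'Hcyc : C'H.IsCycle := by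
    rw [SimpleGraph.Walk.isCycle_def, SimpleGraph.Walk.isTrail_def]
    refine ⟨?_, ?_, ?_⟩
    · rw [SimpleGraph.Walk.edges_transfer]
      exact hC'.isCircuit.isTrail.edges_nodup
    · intro hcontra
      have := congrArg SimpleGraph.Walk.length hcontra
      rw [SimpleGraph.Walk.length_transfer] at this
      simp only [SimpleGraph.Walk.length_nil] at this
      omega
    · rw [SimpleGraph.Walk.support_transfer]
      exact hC'.2
  have hxCH : x ∈ CH.support := by rw [hCHdef, SimpleGraph.Walk.support_transfer]; exact hxC
  have hxC'H : x ∈ C'H.support := by rw [hC'Hdef, SimpleGraph.Walk.support_transfer]; exact hxC'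
  -- rotate the two cycles to be based at x
  set E₁ := CH.rotate x hxCH with hE₁def
  set E₂ := C'H.rotate x hxC'H with hE₂def
  have hE₁cyc : E₁.IsCycle := hCHcyc.rotate hxCH
  have hE₂cyc : E₂.IsCycle := hC'Hcyc.rotate hxC'H
  have hE₁len : E₁.length = 2 * k := by
    rw [hE₁def, Stmt6Aux.length_rotate', hCHdef, SimpleGraph.Walk.length_transfer, hClen]
  have hE₂len : E₂.length = 2 * k := by
    rw [hE₂def, Stmt6Aux.length_rotate', hC'Hdef, SimpleGraph.Walk.length_transfer, hC'len]
  have hE₁e : ∀ e, e ∈ E₁.edges ↔ e ∈ C.edges := by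
    intro e
    rw [hE₁def, (SimpleGraph.Walk.rotate_edges CH x hxCH).perm.mem_iff, hCHdef,
      SimpleGraph.Walk.edges_transfer]
  have hE₂e : ∀ e, e ∈ E₂.edges ↔ e ∈ C'.edges := by
    intro e
    rw [hE₂def, (SimpleGraph.Walk.rotate_edges C'H x hxC'H).perm.mem_iff, hC'Hdef,
      SimpleGraph.Walk.edges_transfer]
  have hE₁s : ∀ z, z ∈ E₁.support ↔ z ∈ C.support := by
    intro z
    rw [hE₁def, Stmt6Aux.mem_support_rotate CH hCHcyc.not_nil hxCH, hCHdef,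
      SimpleGraph.Walk.support_transfer]
  have hE₂s : ∀ z, z ∈ E₂.support ↔ z ∈ C'.support := by
    intro z
    rw [hE₂def, Stmt6Aux.mem_support_rotate C'H hC'Hcyc.not_nil hxC'H, hC'Hdef,
      SimpleGraph.Walk.support_transfer]
  have hdisj₁₂ : ∀ e ∈ E₁.edges, e ∉ E₂.edges := by
    intro e he hc
    exact hdisj e ((hE₁e e).mp he) ((hE₂e e).mp hc)
  have hdisj₂₁ : ∀ e ∈ E₂.edges, e ∉ E₁.edges := fun e he hc => hdisj₁₂ e hc he
  -- the girth hypothesis, in convenient form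
  have hgb : ∀ (u : V) (cyc : H.Walk u u), cyc.IsCycle → 2 * k - 2 ≤ cyc.length := by
    intro u cyc hcyc
    have h1 : H.egirth ≤ (cyc.length : ℕ∞) :=
      iInf_le_of_le u (iInf_le_of_le cyc (iInf_le _ hcyc))
    have h2 : ((H.girth : ℕ) : ℕ∞) ≤ H.egirth := ENat.coe_toNat_le_self _
    have h3 : ((2 * k - 2 : ℕ) : ℕ∞) ≤ (cyc.length : ℕ∞) :=
      le_trans (le_trans hgirth h2) h1
    exact_mod_cast h3
  -- pick good neighbours on each side
  have hgn₁ := Stmt6Aux.good_neighbor hk hgb E₁ E₂ hE₁cyc hE₂cyc hE₁len hE₂len hdisj₁₂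
  have hgn₂ := Stmt6Aux.good_neighbor hk hgb E₂ E₁ hE₂cyc hE₁cyc hE₂len hE₁len hdisj₂₁
  -- package the choice of orientation
  have hchoice₁ : ∃ D : H.Walk x x, D.IsCycle ∧ D.length = 2 * k ∧
      (∀ e, e ∈ D.edges ↔ e ∈ C.edges) ∧ (∀ z, z ∈ D.support ↔ z ∈ C.support) ∧
      D.getVert 1 ∉ C'.support := by
    rcases hgn₁ with h | h
    · exact ⟨E₁, hE₁cyc, hE₁len, hE₁e, hE₁s, fun hc => h ((hE₂s _).mpr hc)⟩
    · refine ⟨E₁.reverse, Stmt6Aux.IsCycle.rev hE₁cyc, by rw [SimpleGraph.Walk.length_reverse,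
        hE₁len], ?_, ?_, fun hc => h ((hE₂s _).mpr hc)⟩
      · intro e
        rw [SimpleGraph.Walk.edges_reverse, List.mem_reverse]
        exact hE₁e e
      · intro z
        rw [SimpleGraph.Walk.support_reverse, List.mem_reverse]
        exact hE₁s z
  have hchoice₂ : ∃ D' : H.Walk x x, D'.IsCycle ∧ D'.length = 2 * k ∧
      (∀ e, e ∈ D'.edges ↔ e ∈ C'.edges) ∧ (∀ z, z ∈ D'.support ↔ z ∈ C'.support) ∧
      D'.getVert 1 ∉ C.support := by
    rcases hgn₂ with h | h
    · exact ⟨E₂, hE₂cyc, hE₂len, hE₂e, hE₂s, fun hc => h ((hE₁s _).mpr hc)⟩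
    · refine ⟨E₂.reverse, Stmt6Aux.IsCycle.rev hE₂cyc, by rw [SimpleGraph.Walk.length_reverse,
        hE₂len], ?_, ?_, fun hc => h ((hE₁s _).mpr hc)⟩
      · intro e
        rw [SimpleGraph.Walk.edges_reverse, List.mem_reverse]
        exact hE₂e e
      · intro z
        rw [SimpleGraph.Walk.support_reverse, List.mem_reverse]
        exact hE₂s z
  obtain ⟨D, hDcyc, hDlen, hDe, hDs, hDgood⟩ := hchoice₁
  obtain ⟨D', hD'cyc, hD'len, hD'e, hD's, hD'good⟩ := hchoice₂
  have hdisjDD' : ∀ e ∈ D.edges, e ∉ D'.edges := by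
    intro e he hc
    exact hdisj e ((hDe e).mp he) ((hD'e e).mp hc)
  have haD : D.getVert 1 ∉ D'.support := fun hc => hDgood ((hD's _).mp hc)
  have hbD : D'.getVert 1 ∉ D.support := fun hc => hD'good ((hDs _).mp hc)
  obtain ⟨a, b, a', b', Q₁, Q₂, hp1, hp2, hl1, hl2, hcov, hdisjQ⟩ :=
    Stmt6Aux.build hk D D' hDcyc hD'cyc hDlen hD'len hdisjDD' haD hbD
  refine ⟨a, b, a', b', Q₁, Q₂, hp1, hp2, hl1, hl2, ?_, hdisjQ⟩
  intro e
  rw [hedge e, ← hDe e, ← hD'e e]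
  exact hcov e
end

section
/- Let k ≥ 3, let C be a cycle of length 2k and P a path of length ℓ ∈ {2k−1, 2k, 2k+1}, edge-disjoint from C with no end vertex of P in V(C), such that H = C ∪ P has girth at least 2k−2. Then |V(C) ∩ V(P)| ≤ 4, and if |V(C) ∩ V(P)| = 4 then k ≤ 4. -/
set_option linter.unusedSectionVars false
set_option linter.unusedVariables false

namespace Stmt8Aux

open SimpleGraph Walk List

variable {V : Type*} [DecidableEq V] {H : SimpleGraph V}

lemma support_takeUntil_prefix {a b z : V} (w : H.Walk a b) (hz : z ∈ w.support) :
    (w.takeUntil z hz).support <+: w.support := by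
  conv_rhs => rw [← Walk.take_spec w hz]
  rw [Walk.support_append]
  exact ⟨_, rfl⟩

lemma length_takeUntil_add {a b z : V} (w : H.Walk a b) (hz : z ∈ w.support) :
    (w.takeUntil z hz).length + (w.dropUntil z hz).length = w.length := by
  conv_rhs => rw [← Walk.take_spec w hz]
  rw [Walk.length_append]

lemma support_getElem_takeUntil {a b z : V} (w : H.Walk a b) (hz : z ∈ w.support)
    (h : (w.takeUntil z hz).length < w.support.length) :
    w.support[(w.takeUntil z hz).length] = z := by
  have hp := support_takeUntil_prefix w hz
  have hl : (w.takeUntil z hz).support.length = (w.takeUntil z hz).length + 1 :=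
    Walk.length_support _
  have h1 : (w.takeUntil z hz).length < (w.takeUntil z hz).support.length := by omega
  rw [← List.IsPrefix.getElem hp h1]
  have := Walk.getLast_support (w.takeUntil z hz)
  rw [List.getLast_eq_getElem] at this
  simpa [hl] using this


lemma end_mem_support_tail {a b : V} (p : H.Walk a b) (hab : a ≠ b) :
    b ∈ p.support.tail := by
  have := Walk.end_mem_support p
  rw [Walk.support_eq_cons p] at this
  rcases List.mem_cons.mp this with h | h
  · exact absurd h.symm hab
  · exact h

lemma cycle_arc_paths {x z : V} {c : H.Walk x x} (hc : c.IsCycle)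
    (hz : z ∈ c.support) (hzx : z ≠ x) :
    (c.takeUntil z hz).IsPath ∧ (c.dropUntil z hz).IsPath := by
  set T := c.takeUntil z hz with hT
  set D := c.dropUntil z hz with hD
  have htail : T.support.tail ++ D.support.tail = c.support.tail := by
    have := Walk.take_spec c hz
    have h2 : (T.append D).support = c.support := by rw [this]
    rw [Walk.support_append] at h2
    have h3 := congrArg List.tail h2
    rwa [List.tail_append_of_ne_nil (Walk.support_ne_nil _)] at h3
  have hnd : (T.support.tail ++ D.support.tail).Nodup := by
    rw [htail]; exact hc.support_nodup
  have hTt := (List.nodup_append.mp hnd).1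
  have hDt := (List.nodup_append.mp hnd).2.1
  have hdisj : T.support.tail.Disjoint D.support.tail := (List.nodup_append'.mp hnd).2.2
  constructor
  · apply Walk.IsPath.mk'
    rw [Walk.support_eq_cons T]
    refine List.nodup_cons.mpr ⟨?_, hTt⟩
    intro hx
    exact hdisj hx (end_mem_support_tail D hzx)
  · apply Walk.IsPath.mk'
    rw [Walk.support_eq_cons D]
    refine List.nodup_cons.mpr ⟨?_, hDt⟩
    intro hzD
    exact hdisj (end_mem_support_tail T (Ne.symm hzx)) hzD

lemma mem_support_rotate {x y z : V} (c : H.Walk x x) (h : y ∈ c.support) :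
    z ∈ (c.rotate y h).support ↔ z ∈ c.support := by
  unfold Walk.rotate
  rw [Walk.mem_support_append_iff]
  conv_rhs => rw [← Walk.take_spec c h]
  rw [Walk.mem_support_append_iff]
  tauto

lemma mem_edges_rotate {x y : V} (c : H.Walk x x) (h : y ∈ c.support) {e} :
    e ∈ (c.rotate y h).edges ↔ e ∈ c.edges :=
  (Walk.rotate_edges c y h).perm.mem_iff

lemma walk_length_rotate {x y : V} (c : H.Walk x x) (h : y ∈ c.support) :
    (c.rotate y h).length = c.length := by
  unfold Walk.rotate
  rw [Walk.length_append, Nat.add_comm]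
  exact length_takeUntil_add c h


lemma isCycle_append {x y : V} (p : H.Walk x y) (q : H.Walk y x) (hxy : x ≠ y)
    (hp : p.IsPath) (hq : q.IsPath)
    (hsupp : ∀ z, z ∈ p.support → z ∈ q.support → z = x ∨ z = y)
    (hedges : ∀ e ∈ p.edges, e ∉ q.edges) :
    (p.append q).IsCycle := by
  have hpt : x ∉ p.support.tail := by
    have := hp.support_nodup
    rw [Walk.support_eq_cons p] at this
    exact (List.nodup_cons.mp this).1
  have hqt : y ∉ q.support.tail := by
    have := hq.support_nodup
    rw [Walk.support_eq_cons q] at this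
    exact (List.nodup_cons.mp this).1
  constructor
  · constructor
    · constructor
      rw [Walk.edges_append]
      exact hp.isTrail.edges_nodup.append hq.isTrail.edges_nodup
        (fun e he he' => hedges e he he')
    · intro h
      have hl := congrArg Walk.length h
      rw [Walk.length_append] at hl
      simp only [Walk.length_nil] at hl
      have : p.length = 0 := by omega
      exact hxy (Walk.eq_of_length_eq_zero this)
  · rw [Walk.support_append, List.tail_append_of_ne_nil (Walk.support_ne_nil _)]
    refine List.Nodup.append ?_ ?_ ?_
    · have := hp.support_nodup; rw [Walk.support_eq_cons p] at this
      exact (List.nodup_cons.mp this).2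
    · have := hq.support_nodup; rw [Walk.support_eq_cons q] at this
      exact (List.nodup_cons.mp this).2
    · intro z hz1 hz2
      have hz1' : z ∈ p.support := by rw [Walk.support_eq_cons p]; exact List.mem_cons_of_mem _ hz1
      have hz2' : z ∈ q.support := by rw [Walk.support_eq_cons q]; exact List.mem_cons_of_mem _ hz2
      rcases hsupp z hz1' hz2' with rfl | rfl
      · exact hpt hz1
      · exact hqt hz2


lemma cycle_ineq {k : ℕ} {x y : V} (Cx : H.Walk x x) (hc : Cx.IsCycle)
    (hlen : Cx.length = 2*k)
    (hgH : ∀ {w : V} (c : H.Walk w w), c.IsCycle → 2*k-2 ≤ c.length)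
    (hy : y ∈ Cx.support) (hxy : y ≠ x)
    (Q : H.Walk x y) (hQ : Q.IsPath)
    (hQe : ∀ e ∈ Q.edges, e ∉ Cx.edges)
    (hQi : ∀ z, z ∈ Q.support → z ∈ Cx.support → z = x ∨ z = y) :
    2*k-2 ≤ Q.length + (Cx.takeUntil y hy).length ∧
    2*k-2 ≤ Q.length + (2*k - (Cx.takeUntil y hy).length) ∧
    1 ≤ (Cx.takeUntil y hy).length ∧ (Cx.takeUntil y hy).length ≤ 2*k - 1 := by
  set T := Cx.takeUntil y hy with hT
  set D := Cx.dropUntil y hy with hD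
  obtain ⟨hTp, hDp⟩ := cycle_arc_paths hc hy hxy
  have hsum : T.length + D.length = 2*k := by
    rw [← hlen]; exact length_takeUntil_add Cx hy
  have hT1 : 1 ≤ T.length := by
    rcases Nat.eq_zero_or_pos T.length with h | h
    · exact absurd (Walk.eq_of_length_eq_zero h).symm hxy
    · exact h
  have hD1 : 1 ≤ D.length := by
    rcases Nat.eq_zero_or_pos D.length with h | h
    · exact absurd (Walk.eq_of_length_eq_zero h) hxy
    · exact h
  have hc1 : (Q.append T.reverse).IsCycle := by
    apply isCycle_append Q T.reverse hxy.symm hQ hTp.reverse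
    · intro z hz1 hz2
      rw [Walk.support_reverse, List.mem_reverse] at hz2
      exact hQi z hz1 (Walk.support_takeUntil_subset Cx hy hz2)
    · intro e he he'
      rw [Walk.edges_reverse, List.mem_reverse] at he'
      exact hQe e he (Walk.edges_takeUntil_subset Cx hy he')
  have hc2 : (Q.append D).IsCycle := by
    apply isCycle_append Q D hxy.symm hQ hDp
    · intro z hz1 hz2
      exact hQi z hz1 (Walk.support_dropUntil_subset Cx hy hz2)
    · intro e he he'
      exact hQe e he (Walk.edges_dropUntil_subset Cx hy he')
  have h1 := hgH _ hc1
  have h2 := hgH _ hc2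
  rw [Walk.length_append, Walk.length_reverse] at h1
  rw [Walk.length_append] at h2
  refine ⟨h1, ?_, hT1, by omega⟩
  have : D.length = 2*k - T.length := by omega
  omega

lemma antipodal {k : ℕ} (hk : 3 ≤ k) {x y z : V} (Cx : H.Walk x x) (hc : Cx.IsCycle)
    (hlen : Cx.length = 2*k) (hy : y ∈ Cx.support) (hxy : y ≠ x)
    (hd : (Cx.takeUntil y hy).length = k)
    (hz : z ∈ (Cx.rotate y hy).support)
    (hd' : ((Cx.rotate y hy).takeUntil z hz).length = k) : z = x := by
  have hsum : (Cx.takeUntil y hy).length + (Cx.dropUntil y hy).length = 2*k := by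
    rw [← hlen]; exact length_takeUntil_add Cx hy
  have hDlen : (Cx.dropUntil y hy).length = k := by omega
  have hRsupp : (Cx.rotate y hy).support =
      (Cx.dropUntil y hy).support ++ (Cx.takeUntil y hy).support.tail := by
    unfold Walk.rotate
    rw [Walk.support_append]
  have hRlen : (Cx.rotate y hy).support.length = 2*k + 1 := by
    rw [Walk.length_support]
    unfold Walk.rotate
    rw [Walk.length_append]
    omega
  have hzk : (Cx.rotate y hy).support[k]'(by omega) = z := by
    have := support_getElem_takeUntil (Cx.rotate y hy) hz (by rw [hRlen]; omega)
    simpa [hd'] using this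
  have hxk : (Cx.rotate y hy).support[k]'(by omega) = x := by
    have hDsl : (Cx.dropUntil y hy).support.length = k + 1 := by
      rw [Walk.length_support, hDlen]
    have h1 := List.getElem_of_eq hRsupp (show k < (Cx.rotate y hy).support.length by omega)
    rw [h1, List.getElem_append_left (by rw [hDsl]; omega)]
    have := Walk.getLast_support (Cx.dropUntil y hy)
    rw [List.getLast_eq_getElem] at this
    simpa [hDsl] using this
  rw [← hzk, hxk]


lemma first_split {a v : V} (W : H.Walk a v) (hW : W.IsPath) (S : List V)
    (y : V) (t : List V) (hfil : W.support.tail.filter (· ∈ S) = y :: t) :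
    ∃ (hyW : y ∈ W.support),
      y ≠ a ∧
      ((W.dropUntil y hyW).support.tail.filter (· ∈ S)) = t ∧
      (∀ z, z ∈ (W.takeUntil y hyW).support → z ∈ S → z = a ∨ z = y) ∧
      1 ≤ (W.takeUntil y hyW).length := by
  have hyt : y ∈ W.support.tail ∧ y ∈ S := by
    have : y ∈ W.support.tail.filter (· ∈ S) := by rw [hfil]; exact List.mem_cons_self
    simpa using this
  have hyW : y ∈ W.support := by
    rw [Walk.support_eq_cons W]; exact List.mem_cons_of_mem _ hyt.1
  have hya : y ≠ a := by
    intro h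
    have := hW.support_nodup
    rw [Walk.support_eq_cons W] at this
    exact (List.nodup_cons.mp this).1 (h ▸ hyt.1)
  refine ⟨hyW, hya, ?_⟩
  set T := W.takeUntil y hyW with hT
  set D := W.dropUntil y hyW with hD
  have hT1 : 1 ≤ T.length := by
    rcases Nat.eq_zero_or_pos T.length with h | h
    · exact absurd (Walk.eq_of_length_eq_zero h).symm hya
    · exact h
  have htail : T.support.tail ++ D.support.tail = W.support.tail := by
    have h2 : (T.append D).support = W.support := by rw [Walk.take_spec]
    rw [Walk.support_append] at h2
    have h3 := congrArg List.tail h2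
    rwa [List.tail_append_of_ne_nil (Walk.support_ne_nil _)] at h3
  have hTne : T.support.tail ≠ [] := by
    have := Walk.length_support T
    intro h; rw [Walk.support_eq_cons T, h] at this; simp only [List.length_cons, List.length_nil] at this; omega
  have hTnodup : T.support.Nodup := (hW.takeUntil hyW).support_nodup
  -- T.support.tail = (dropLast) ++ [y]
  have hys : T.support.getLast? = some y := by
    rw [List.getLast?_eq_getLast_of_ne_nil (Walk.support_ne_nil T), Walk.getLast_support]
  have hyt' : T.support.tail.getLast? = some y := by
    rcases hcase : T.support.tail with _ | ⟨b, l⟩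
    · exact absurd hcase hTne
    · rw [Walk.support_eq_cons T, hcase, List.getLast?_cons_cons] at hys
      exact hys
  have hTdec : T.support.tail.dropLast ++ [y] = T.support.tail :=
    List.dropLast_append_getLast? y (by simp [hyt'])
  have hynotdl : y ∉ T.support.tail.dropLast := by
    intro hy
    have hnd : T.support.tail.Nodup := by
      rw [Walk.support_eq_cons T] at hTnodup
      exact (List.nodup_cons.mp hTnodup).2
    rw [← hTdec] at hnd
    exact (List.disjoint_of_nodup_append hnd) hy (List.mem_singleton_self y)
  -- filter of T.support.tail.dropLast is empty
  have hkey : T.support.tail.dropLast.filter (· ∈ S) = [] := by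
    rcases hfl : T.support.tail.dropLast.filter (· ∈ S) with _ | ⟨w, l⟩
    · rfl
    · exfalso
      have hw : w ∈ T.support.tail.dropLast ∧ w ∈ S := by
        have : w ∈ T.support.tail.dropLast.filter (· ∈ S) := by
          rw [hfl]; exact List.mem_cons_self
        simpa using this
      -- w is the head of the full filter, hence w = y
      have hdec2 : W.support.tail.filter (· ∈ S) =
          (T.support.tail.dropLast.filter (· ∈ S)) ++ ([y] ++ (D.support.tail.filter (· ∈ S))) := by
        conv_lhs => rw [← htail, ← hTdec]
        rw [List.filter_append, List.filter_append]
        simp [hyt.2]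
      rw [hfl, hfil] at hdec2
      simp at hdec2
      exact hynotdl (hdec2.1 ▸ hw.1)
  have hfilT : T.support.tail.filter (· ∈ S) = [y] := by
    rw [← hTdec, List.filter_append, hkey]
    simp [hyt.2]
  refine ⟨?_, ?_, hT1⟩
  · have : W.support.tail.filter (· ∈ S) =
        T.support.tail.filter (· ∈ S) ++ D.support.tail.filter (· ∈ S) := by
      rw [← htail, List.filter_append]
    rw [hfil, hfilT] at this
    simpa using this.symm
  · intro z hz hzS
    rw [Walk.support_eq_cons T] at hz
    rcases List.mem_cons.mp hz with rfl | hz'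
    · exact Or.inl rfl
    · rw [← hTdec] at hz'
      rcases List.mem_append.mp hz' with hz2 | hz2
      · exfalso
        have : z ∈ T.support.tail.dropLast.filter (· ∈ S) := by simp [hz2, hzS]
        rw [hkey] at this; simp at this
      · exact Or.inr (List.mem_singleton.mp hz2)


lemma rec_main {k : ℕ} (hk : 3 ≤ k)
    (hgH : ∀ {w : V} (c : H.Walk w w), c.IsCycle → 2*k-2 ≤ c.length) :
    ∀ (N : ℕ) {x v : V} (Cx : H.Walk x x) (W : H.Walk x v),
    W.length ≤ N →
    Cx.IsCycle → Cx.length = 2*k → W.IsPath → v ∉ Cx.support →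
    (∀ e ∈ W.edges, e ∉ Cx.edges) →
    ∃ ds gs : List ℕ,
      ds.length = (W.support.tail.filter (· ∈ Cx.support)).length ∧
      gs.length = ds.length ∧
      (∀ i, i < ds.length →
        1 ≤ ds.getD i 0 ∧ ds.getD i 0 ≤ 2*k-1 ∧
        2*k-2 ≤ gs.getD i 0 + ds.getD i 0 ∧
        2*k-2 ≤ gs.getD i 0 + (2*k - ds.getD i 0)) ∧
      (∀ i, i + 1 < ds.length → ¬(ds.getD i 0 = k ∧ ds.getD (i+1) 0 = k)) ∧
      gs.sum < W.length ∧
      (∀ (hne : ds ≠ []), ∃ (z : V) (hz : z ∈ Cx.support),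
        z ∈ W.support.tail ∧ ds.getD 0 0 = (Cx.takeUntil z hz).length) := by
  intro N
  induction N with
  | zero =>
    intro x v Cx W hN hc hlen hW hv hWe
    exfalso
    have : W.length = 0 := by omega
    have := Walk.eq_of_length_eq_zero this
    exact hv (this ▸ Walk.start_mem_support Cx)
  | succ N ih =>
    intro x v Cx W hN hc hlen hW hv hWe
    have hxv : x ≠ v := fun h => hv (h ▸ Walk.start_mem_support Cx)
    have hW1 : 1 ≤ W.length := by
      rcases Nat.eq_zero_or_pos W.length with h | h
      · exact absurd (Walk.eq_of_length_eq_zero h) hxv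
      · exact h
    rcases hfil : W.support.tail.filter (· ∈ Cx.support) with _ | ⟨y, t⟩
    · exact ⟨[], [], by simp [hfil], by simp, by simp, by simp, by simp; omega,
        by simp⟩
    · obtain ⟨hyW, hya, hfil', hQi, hQ1⟩ := first_split W hW Cx.support y t hfil
      set Q := W.takeUntil y hyW with hQdef
      set W' := W.dropUntil y hyW with hW'def
      have hyC : y ∈ Cx.support := by
        have : y ∈ W.support.tail.filter (· ∈ Cx.support) := by
          rw [hfil]; exact List.mem_cons_self
        simpa using (List.mem_filter.mp this).2
      have hlensum : Q.length + W'.length = W.length := length_takeUntil_add W hyW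
      have hW'len : W'.length ≤ N := by omega
      -- cycle inequality for this segment
      have hQpath : Q.IsPath := hW.takeUntil hyW
      have hQe : ∀ e ∈ Q.edges, e ∉ Cx.edges := fun e he =>
        hWe e (Walk.edges_takeUntil_subset W hyW he)
      obtain ⟨hI1, hI2, hd1, hd2⟩ := cycle_ineq Cx hc hlen hgH hyC hya Q hQpath hQe hQi
      set d := (Cx.takeUntil y hyC).length with hddef
      -- rotate and recurse
      set Cy := Cx.rotate y hyC with hCydef
      have hCyc : Cy.IsCycle := hc.rotate hyC
      have hCylen : Cy.length = 2*k := by rw [hCydef, walk_length_rotate Cx hyC, hlen]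
      have hW'path : W'.IsPath := hW.dropUntil hyW
      have hvCy : v ∉ Cy.support := fun h => hv ((mem_support_rotate Cx hyC).mp h)
      have hW'e : ∀ e ∈ W'.edges, e ∉ Cy.edges := fun e he h' =>
        hWe e (Walk.edges_dropUntil_subset W hyW he) ((mem_edges_rotate Cx hyC).mp h')
      obtain ⟨ds', gs', hlen', hglen', hper', hchain', hsum', hhead'⟩ :=
        ih Cy W' hW'len hCyc hCylen hW'path hvCy hW'e
      have hfilCy : W'.support.tail.filter (· ∈ Cy.support) =
          W'.support.tail.filter (· ∈ Cx.support) := by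
        apply List.filter_congr
        intro z hz
        simp [hCydef, mem_support_rotate Cx hyC]
      rw [hfilCy, hfil'] at hlen'
      refine ⟨d :: ds', Q.length :: gs', ?_, ?_, ?_, ?_, ?_, ?_⟩
      · simp [hfil, hlen']
      · simp [hglen']
      · intro i hi
        cases i with
        | zero => simp only [List.getD_cons_zero]; exact ⟨hd1, hd2, hI1, hI2⟩
        | succ n =>
          simp only [List.getD_cons_succ]
          exact hper' n (by simpa using hi)
      · intro i hi
        cases i with
        | zero =>
          simp only [List.getD_cons_succ, List.getD_cons_zero]
          rintro ⟨hdk, hdk'⟩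
          have hne' : ds' ≠ [] := by
            intro h; rw [h] at hi; simp at hi
          obtain ⟨z, hz, hzW', hzd⟩ := hhead' hne'
          have hd'k : (Cy.takeUntil z hz).length = k := by
            rw [← hzd]
            rcases ds' with _ | ⟨d0, rest⟩
            · exact absurd rfl hne'
            · simpa using hdk'
          have hzx : z = x := antipodal hk Cx hc hlen hyC hya hdk hz hd'k
          -- but x ∉ W'.support.tail
          have hxW' : x ∉ W'.support.tail := by
            have hsupp : Q.support ++ W'.support.tail = W.support := by
              conv_rhs => rw [← Walk.take_spec W hyW]
              rw [Walk.support_append]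
            have hnd : (Q.support ++ W'.support.tail).Nodup := by
              rw [hsupp]; exact hW.support_nodup
            exact fun h => (List.disjoint_of_nodup_append hnd)
              (Walk.start_mem_support Q) h
          exact hxW' (hzx ▸ hzW')
        | succ n =>
          simp only [List.getD_cons_succ]
          exact hchain' n (by simpa using hi)
      · simpa using by omega
      · intro _
        refine ⟨y, hyC, ?_, ?_⟩
        · have : y ∈ W.support.tail.filter (· ∈ Cx.support) := by
            rw [hfil]; exact List.mem_cons_self
          exact (List.mem_filter.mp this).1
        · simp [hddef]


lemma getD_four_le_sum (l : List ℕ) :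
    l.getD 0 0 + l.getD 1 0 + l.getD 2 0 + l.getD 3 0 ≤ l.sum := by
  rcases l with _ | ⟨a, _ | ⟨b, _ | ⟨c, _ | ⟨d, e⟩⟩⟩⟩ <;> simp [List.sum_cons] <;> omega

lemma arith1 (k s g0 g1 g2 g3 d0 d1 d2 d3 : ℕ) (hk : 3 ≤ k)
  (hs : s ≤ 2*k-1) (hfour : g0 + g1 + g2 + g3 ≤ s)
  (f0 : 1 ≤ d0 ∧ d0 ≤ 2*k-1 ∧ 2*k-2 ≤ g0 + d0 ∧ 2*k-2 ≤ g0 + (2*k - d0))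
  (f1 : 1 ≤ d1 ∧ d1 ≤ 2*k-1 ∧ 2*k-2 ≤ g1 + d1 ∧ 2*k-2 ≤ g1 + (2*k - d1))
  (f2 : 1 ≤ d2 ∧ d2 ≤ 2*k-1 ∧ 2*k-2 ≤ g2 + d2 ∧ 2*k-2 ≤ g2 + (2*k - d2))
  (f3 : 1 ≤ d3 ∧ d3 ≤ 2*k-1 ∧ 2*k-2 ≤ g3 + d3 ∧ 2*k-2 ≤ g3 + (2*k - d3))
  (c0 : ¬(d0 = k ∧ d1 = k)) (c1 : ¬(d1 = k ∧ d2 = k)) (c2 : ¬(d2 = k ∧ d3 = k)) :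
  False := by omega

lemma arith2 (k s g0 g1 g2 d0 d1 d2 : ℕ) (hk5 : 5 ≤ k)
  (hs : s ≤ 2*k-1) (hthree : g0 + g1 + g2 ≤ s)
  (f0 : 1 ≤ d0 ∧ d0 ≤ 2*k-1 ∧ 2*k-2 ≤ g0 + d0 ∧ 2*k-2 ≤ g0 + (2*k - d0))
  (f1 : 1 ≤ d1 ∧ d1 ≤ 2*k-1 ∧ 2*k-2 ≤ g1 + d1 ∧ 2*k-2 ≤ g1 + (2*k - d1))
  (f2 : 1 ≤ d2 ∧ d2 ≤ 2*k-1 ∧ 2*k-2 ≤ g2 + d2 ∧ 2*k-2 ≤ g2 + (2*k - d2))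
  (c0 : ¬(d0 = k ∧ d1 = k)) (c1 : ¬(d1 = k ∧ d2 = k)) :
  False := by omega

end Stmt8Aux

open Stmt8Aux SimpleGraph Walk List in
/-- Let `k ≥ 3`, `C` a cycle of length `2k` and `P` a path of length
`ℓ ∈ {2k-1, 2k, 2k+1}`, edge-disjoint from `C` with no end vertex of `P` on `C`,
such that `H = C ∪ P` has girth at least `2k-2`.  Then `|V(C) ∩ V(P)| ≤ 4`,
and if `|V(C) ∩ V(P)| = 4` then `k ≤ 4`. -/
theorem stmt8 {V : Type*} [DecidableEq V] (k : ℕ) (hk : 3 ≤ k) (G : SimpleGraph V)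
    {c u v : V} (C : G.Walk c c) (P : G.Walk u v)
    (hC : C.IsCycle) (hClen : C.length = 2 * k)
    (hP : P.IsPath)
    (hlen : P.length = 2 * k - 1 ∨ P.length = 2 * k ∨ P.length = 2 * k + 1)
    (hdisj : ∀ e ∈ C.edges, e ∉ P.edges)
    (hu : u ∉ C.support) (hv : v ∉ C.support)
    (hgirth : ((2 * k - 2 : ℕ) : ℕ∞) ≤ (unionGraph C P).girth) :
    (C.support.toFinset ∩ P.support.toFinset).card ≤ 4 ∧
    ((C.support.toFinset ∩ P.support.toFinset).card = 4 → k ≤ 4) := by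
  classical
  set H := unionGraph C P with hH
  -- transfer the walks into H
  have hCe : ∀ e ∈ C.edges, e ∈ H.edgeSet := by
    intro e he
    rw [hH, unionGraph, SimpleGraph.edgeSet_fromEdgeSet]
    exact ⟨Or.inl he, G.not_isDiag_of_mem_edgeSet (Walk.edges_subset_edgeSet C he)⟩
  have hPe : ∀ e ∈ P.edges, e ∈ H.edgeSet := by
    intro e he
    rw [hH, unionGraph, SimpleGraph.edgeSet_fromEdgeSet]
    exact ⟨Or.inr he, G.not_isDiag_of_mem_edgeSet (Walk.edges_subset_edgeSet P he)⟩
  set CH := C.transfer H hCe with hCHdef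
  set PH := P.transfer H hPe with hPHdef
  have hCHs : CH.support = C.support := Walk.support_transfer _ _
  have hPHs : PH.support = P.support := Walk.support_transfer _ _
  have hCHe : CH.edges = C.edges := Walk.edges_transfer _ _
  have hPHe : PH.edges = P.edges := Walk.edges_transfer _ _
  have hCHc : CH.IsCycle := hC.transfer hCe
  have hPHp : PH.IsPath := hP.transfer hPe
  have hCHlen : CH.length = 2*k := by rw [Walk.length_transfer, hClen]
  have hPHlen : PH.length = P.length := Walk.length_transfer _ _
  -- girth fact
  have h2k : 2*k - 2 ≤ H.girth := by exact_mod_cast hgirth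
  have hgH : ∀ {w : V} (cy : H.Walk w w), cy.IsCycle → 2*k-2 ≤ cy.length := by
    intro w cy hcy
    have h1 : H.egirth ≤ cy.length := SimpleGraph.le_egirth.mp le_rfl _ cy hcy
    have h2 : H.girth ≤ cy.length := by
      have := ENat.toNat_le_toNat h1 (by simp)
      simpa [SimpleGraph.girth] using this
    omega
  -- the list of intersection vertices along P
  set t := P.support.filter (· ∈ C.support) with ht
  have htnd : t.Nodup := hP.support_nodup.filter _
  have hcard : (C.support.toFinset ∩ P.support.toFinset).card = t.length := by
    rw [← List.toFinset_card_of_nodup htnd]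
    congr 1
    ext z
    simp only [Finset.mem_inter, List.mem_toFinset, ht, List.mem_filter, decide_eq_true_eq]
    tauto
  have hfil0 : PH.support.tail.filter (· ∈ CH.support) = t := by
    rw [hCHs, ht]
    have : P.support.filter (· ∈ C.support) = P.support.tail.filter (· ∈ C.support) := by
      rw [Walk.support_eq_cons P, List.tail_cons, List.filter_cons_of_neg (by simpa using hu)]
    rw [this, hPHs]
  rcases hcaset : t with _ | ⟨x0, t'⟩
  · rw [hcard, hcaset]
    simp
  · -- split off the initial segment
    rw [hcaset] at hfil0
    obtain ⟨hx0P, hx0u, hfil1, _, hQ01⟩ := first_split PH hPHp CH.support x0 t' hfil0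
    have hx0C : x0 ∈ CH.support := by
      have : x0 ∈ t := by rw [hcaset]; exact List.mem_cons_self
      rw [ht] at this
      rw [hCHs]
      simpa using (List.mem_filter.mp this).2
    set Cx := CH.rotate x0 hx0C with hCxdef
    set W0 := PH.dropUntil x0 hx0P with hW0def
    have hCxc : Cx.IsCycle := hCHc.rotate hx0C
    have hCxlen : Cx.length = 2*k := by rw [hCxdef, walk_length_rotate, hCHlen]
    have hW0p : W0.IsPath := hPHp.dropUntil hx0P
    have hvCx : v ∉ Cx.support := by
      rw [hCxdef]
      intro h
      exact hv (hCHs ▸ (mem_support_rotate CH hx0C).mp h)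
    have hW0e : ∀ e ∈ W0.edges, e ∉ Cx.edges := by
      intro e he h'
      have h1 : e ∈ P.edges := hPHe ▸ Walk.edges_dropUntil_subset PH hx0P he
      have h2 : e ∈ C.edges := hCHe ▸ (mem_edges_rotate CH hx0C).mp h'
      exact hdisj e h2 h1
    have hW0lensum : (PH.takeUntil x0 hx0P).length + W0.length = P.length := by
      rw [← hPHlen]; exact length_takeUntil_add PH hx0P
    have hW0len : W0.length ≤ P.length - 1 := by omega
    have hfilCx : W0.support.tail.filter (· ∈ Cx.support) = t' := by
      rw [← hfil1]
      apply List.filter_congr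
      intro z hz
      simp [hCxdef, mem_support_rotate CH hx0C]
    obtain ⟨ds, gs, hdslen, hgslen, hper, hchain, hsum, _⟩ :=
      rec_main hk hgH W0.length Cx W0 le_rfl hCxc hCxlen hW0p hvCx hW0e
    rw [hfilCx] at hdslen
    have hsum' : gs.sum ≤ 2*k - 1 := by
      have : P.length ≤ 2*k+1 := by omega
      omega
    have hcard' : (C.support.toFinset ∩ P.support.toFinset).card = ds.length + 1 := by
      rw [hcard, hcaset, hdslen]; simp
    have hfour := getD_four_le_sum gs
    constructor
    · by_contra hcon
      push_neg at hcon
      have hds4 : 4 ≤ ds.length := by omega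
      have f0 := hper 0 (by omega)
      have f1 := hper 1 (by omega)
      have f2 := hper 2 (by omega)
      have f3 := hper 3 (by omega)
      have c0 : ¬(ds.getD 0 0 = k ∧ ds.getD 1 0 = k) := hchain 0 (by omega)
      have c1 : ¬(ds.getD 1 0 = k ∧ ds.getD 2 0 = k) := hchain 1 (by omega)
      have c2 : ¬(ds.getD 2 0 = k ∧ ds.getD 3 0 = k) := hchain 2 (by omega)
      exact arith1 k gs.sum (gs.getD 0 0) (gs.getD 1 0) (gs.getD 2 0) (gs.getD 3 0)
        (ds.getD 0 0) (ds.getD 1 0) (ds.getD 2 0) (ds.getD 3 0) hk hsum' hfour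
        f0 f1 f2 f3 c0 c1 c2
    · intro hc4
      have hds3 : ds.length = 3 := by omega
      have f0 := hper 0 (by omega)
      have f1 := hper 1 (by omega)
      have f2 := hper 2 (by omega)
      have c0 : ¬(ds.getD 0 0 = k ∧ ds.getD 1 0 = k) := hchain 0 (by omega)
      have c1 : ¬(ds.getD 1 0 = k ∧ ds.getD 2 0 = k) := hchain 1 (by omega)
      by_contra hk5
      push_neg at hk5
      exact arith2 k gs.sum (gs.getD 0 0) (gs.getD 1 0) (gs.getD 2 0)
        (ds.getD 0 0) (ds.getD 1 0) (ds.getD 2 0) hk5 hsum'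
        (le_trans (Nat.le_add_right _ _) hfour) f0 f1 f2 c0 c1
end

section
/- Let G be a 2k-regular graph (k ≥ 3) with a perfect matching M, and let P be a decomposition of G − M into paths of length 2k−1. Then each vertex of G is the end vertex of exactly one path of P, and consequently the edge set of G admits a partition into closed trails, each of which alternates between paths of P and edges of M (i.e., each closed trail is a cyclic sequence P_0 e_0 P_1 e_1 … P_{r−1} e_{r−1} where the e_i are distinct edges of M and each e_i joins an end vertex of P_i to an end vertex of P_{i+1}). -/
lemma aux_countP_unique {α : Type*} {l : List α} {p : α → Bool} (h : l.countP p = 1) :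
    ∀ a ∈ l, ∀ b ∈ l, p a → p b → a = b := by
  intro a ha b hb hpa hpb
  rw [List.countP_eq_length_filter] at h
  obtain ⟨c, hc⟩ := List.length_eq_one_iff.mp h
  have h1 : a ∈ l.filter p := List.mem_filter.mpr ⟨ha, hpa⟩
  have h2 : b ∈ l.filter p := List.mem_filter.mpr ⟨hb, hpb⟩
  rw [hc, List.mem_singleton] at h1 h2
  rw [h1, h2]

lemma aux_sum_countP {α V : Type*} [Fintype V] [DecidableEq V] (q : V → α → Bool) (l : List α) :
    ∑ v : V, l.countP (q v) =
      (l.map fun a => (Finset.univ.filter fun v => q v a = true).card).sum := by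
  classical
  induction l with
  | nil => simp
  | cons a l ih =>
    simp only [List.countP_cons, List.map_cons, List.sum_cons, Finset.sum_add_distrib, ih]
    rw [add_comm]
    congr 1
    rw [Finset.card_filter]

lemma aux_even_sum : ∀ {l : List ℕ}, (∀ x ∈ l, Even x) → Even l.sum := by
  intro l
  induction l with
  | nil => simp
  | cons a l ih =>
    intro h
    rw [List.sum_cons]
    exact (h a (by simp)).add (ih fun x hx => h x (by simp [hx]))

/-- If `G` is `2k`-regular with a perfect matching `M`, and `D` is a
decomposition of `G - M` into paths of length `2k-1`, then every vertex of `G` is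
an end vertex of exactly one path of `D`, and consequently `E(G)` partitions into
closed trails alternating between paths of `D` and edges of `M`. -/
theorem stmt11 {V : Type*} [Fintype V] [DecidableEq V] (k : ℕ) (hk : 3 ≤ k)
    (G : SimpleGraph V) [DecidableRel G.Adj]
    (hreg : G.IsRegularOfDegree (2 * k))
    (M : G.Subgraph) (hM : M.IsPerfectMatching)
    (D : List (Σ u : V, Σ v : V, (G.deleteEdges M.edgeSet).Walk u v))
    (hpath : ∀ p ∈ D, p.2.2.IsPath ∧ p.2.2.length = 2 * k - 1)
    (hpart : ∀ e, e ∈ (G.deleteEdges M.edgeSet).edgeSet ↔ ∃ p ∈ D, e ∈ p.2.2.edges)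
    (hpw : D.Pairwise fun p q => ∀ e ∈ p.2.2.edges, e ∉ q.2.2.edges) :
    (∀ v : V, D.countP (fun p => decide (p.1 = v ∨ p.2.1 = v)) = 1) ∧
    ∃ (N : ℕ) (r : Fin N → ℕ),
      (∀ t, 1 ≤ r t) ∧
      ∃ (Pf : ∀ t : Fin N, ZMod (r t) → Σ u : V, Σ v : V, (G.deleteEdges M.edgeSet).Walk u v)
        (ef : ∀ t : Fin N, ZMod (r t) → Sym2 V),
        -- the paths used in the closed trails are paths of the decomposition `D`
        (∀ t i, Pf t i ∈ D) ∧
        -- the connecting edges are (distinct) edges of the matching `M`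
        (∀ t i, ef t i ∈ M.edgeSet) ∧
        Function.Injective (fun ti : Σ t : Fin N, ZMod (r t) => ef ti.1 ti.2) ∧
        -- each `e_i` joins an end vertex of `P_i` to an end vertex of `P_{i+1}`
        (∀ t i, ∃ x y, ef t i = s(x, y) ∧
          (x = (Pf t i).1 ∨ x = (Pf t i).2.1) ∧
          (y = (Pf t (i + 1)).1 ∨ y = (Pf t (i + 1)).2.1)) ∧
        -- the closed trails partition the edge set of `G`
        (∀ e, e ∈ G.edgeSet ↔
          ∃! ti : Σ t : Fin N, ZMod (r t),
            e ∈ (Pf ti.1 ti.2).2.2.edges ∨ e = ef ti.1 ti.2) := by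
  classical
  -- the matching as a function
  have hmu : ∀ v : V, ∃! w, M.Adj v w := fun v => hM.1 (hM.2 v)
  choose μ hμ1 hμ2 using hmu
  have hμG : ∀ v, G.Adj v (μ v) := fun v => M.adj_sub (hμ1 v)
  have hμne : ∀ v, μ v ≠ v := by
    intro v h
    have := hμG v
    rw [h] at this
    exact G.loopless.irrefl v this
  have hμinv : ∀ v, μ (μ v) = v := fun v => (hμ2 (μ v) v ((hμ1 v).symm)).symm
  have hMadj : ∀ x y, M.Adj x y ↔ y = μ x := by
    intro x y
    exact ⟨fun h => hμ2 x y h, fun h => h ▸ hμ1 x⟩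
  -- adjacency in G'
  have hG'adj : ∀ x y, (G.deleteEdges M.edgeSet).Adj x y ↔ G.Adj x y ∧ y ≠ μ x := by
    intro x y
    rw [SimpleGraph.deleteEdges_adj, SimpleGraph.Subgraph.mem_edgeSet]
    simp [hMadj x y]
  -- degrees in G'
  have hdeg' : ∀ v, (G.deleteEdges M.edgeSet).degree v = 2 * k - 1 := by
    intro v
    have hnb : (G.deleteEdges M.edgeSet).neighborFinset v = (G.neighborFinset v).erase (μ v) := by
      ext w
      simp only [SimpleGraph.mem_neighborFinset, Finset.mem_erase, hG'adj]
      tauto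
    rw [SimpleGraph.degree, hnb,
      Finset.card_erase_of_mem (by rw [SimpleGraph.mem_neighborFinset]; exact hμG v)]
    rw [← SimpleGraph.degree, hreg v]
  -- the list of all edges of G'
  set E : List (Sym2 V) := D.flatMap (fun p => p.2.2.edges) with hEdef
  have hDnodupedges : ∀ p ∈ D, p.2.2.edges.Nodup := fun p hp =>
    ((hpath p hp).1.isTrail).edges_nodup
  have hEnodup : E.Nodup := by
    rw [hEdef, List.nodup_flatMap]
    exact ⟨hDnodupedges, hpw.imp fun h => h⟩
  have hEmem : ∀ e, e ∈ E ↔ e ∈ (G.deleteEdges M.edgeSet).edgeSet := by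
    intro e
    rw [hEdef, List.mem_flatMap]
    rw [hpart e]
  have hklen : 2 * k - 1 ≠ 0 := by omega
  have hElen : E.length = D.length * (2 * k - 1) := by
    rw [hEdef, List.length_flatMap]
    have hmc : D.map (fun p => p.2.2.edges.length) = D.map (fun _ => 2 * k - 1) :=
      List.map_congr_left (fun p hp => by
        rw [SimpleGraph.Walk.length_edges, (hpath p hp).2])
    rw [hmc, List.map_const', List.sum_replicate, smul_eq_mul]
  -- edge finset of G'
  have hEfin : E.toFinset = (G.deleteEdges M.edgeSet).edgeFinset := by
    ext e
    rw [List.mem_toFinset, hEmem, SimpleGraph.mem_edgeFinset]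
  have hcardE : (G.deleteEdges M.edgeSet).edgeFinset.card = E.length := by
    rw [← hEfin, List.toFinset_card_of_nodup hEnodup]
  have hn : Fintype.card V = 2 * D.length := by
    have hhs := (G.deleteEdges M.edgeSet).sum_degrees_eq_twice_card_edges
    have hL : ∑ v : V, (G.deleteEdges M.edgeSet).degree v = Fintype.card V * (2 * k - 1) := by
      rw [Finset.sum_congr rfl (fun v _ => hdeg' v), Finset.sum_const, Finset.card_univ,
        smul_eq_mul]
    rw [hL, hcardE, hElen, ← mul_assoc] at hhs
    exact Nat.eq_of_mul_eq_mul_right (by omega) hhs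
  have hdegcnt : ∀ v, E.countP (fun e => decide (v ∈ e)) = 2 * k - 1 := by
    intro v
    rw [List.countP_eq_length_filter]
    rw [← List.toFinset_card_of_nodup (hEnodup.filter _)]
    have hfe : (E.filter (fun e => decide (v ∈ e))).toFinset
        = (G.deleteEdges M.edgeSet).incidenceFinset v := by
      ext e
      rw [List.mem_toFinset, List.mem_filter, SimpleGraph.mem_incidenceFinset]
      rw [hEmem]
      simp [SimpleGraph.incidenceSet]
    rw [hfe, SimpleGraph.card_incidenceFinset_eq_degree, hdeg']
  have hcnt_flat : ∀ v, E.countP (fun e => decide (v ∈ e))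
      = (D.map (fun p => p.2.2.edges.countP (fun e => decide (v ∈ e)))).sum := by
    intro v
    rw [hEdef, List.countP_flatMap]
    rfl
  have hends_ne : ∀ p ∈ D, p.1 ≠ p.2.1 := by
    rintro ⟨u, w, q⟩ hp h
    dsimp only at h
    subst h
    have h1 := (hpath _ hp).1
    rw [SimpleGraph.Walk.isPath_iff_eq_nil] at h1
    have hl := (hpath _ hp).2
    rw [h1] at hl
    simp only [SimpleGraph.Walk.length_nil] at hl
    omega
  have hodd_iff : ∀ p ∈ D, ∀ v,
      (Odd (p.2.2.edges.countP (fun e => decide (v ∈ e))) ↔ (p.1 = v ∨ p.2.1 = v)) := by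
    intro p hp v
    have h := (hpath p hp).1.isTrail.even_countP_edges_iff v
    have hne := hends_ne p hp
    rw [← Nat.not_even_iff_odd, h]
    simp only [hne, ne_eq, not_false_iff, true_implies]
    push_neg
    constructor
    · rintro h2
      rcases em (v = p.1) with h3 | h3
      · exact Or.inl h3.symm
      · exact Or.inr (h2 h3).symm
    · rintro (h2 | h2) h3
      · exact absurd h2.symm h3
      · exact h2.symm
  have hoddk : Odd (2 * k - 1) := ⟨k - 1, by omega⟩
  have hge1 : ∀ v, 1 ≤ D.countP (fun p => decide (p.1 = v ∨ p.2.1 = v)) := by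
    intro v
    rw [Nat.one_le_iff_ne_zero]
    intro h0
    rw [List.countP_eq_zero] at h0
    have heven : Even (E.countP (fun e => decide (v ∈ e))) := by
      rw [hcnt_flat v]
      apply aux_even_sum
      intro x hx
      rw [List.mem_map] at hx
      obtain ⟨p, hp, rfl⟩ := hx
      rw [← Nat.not_odd_iff_even, hodd_iff p hp v]
      intro hcon
      have := h0 p hp
      simp only [decide_eq_true_eq] at this
      exact this hcon
    rw [hdegcnt v] at heven
    exact (Nat.not_even_iff_odd.mpr hoddk) heven
  have hsum : ∑ v : V, D.countP (fun p => decide (p.1 = v ∨ p.2.1 = v)) = 2 * D.length := by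
    rw [aux_sum_countP]
    have hm2 : D.map (fun p =>
        (Finset.univ.filter fun v => decide (p.1 = v ∨ p.2.1 = v) = true).card)
        = D.map (fun _ => 2) := by
      apply List.map_congr_left
      intro p hp
      have hfil : (Finset.univ.filter fun v => decide (p.1 = v ∨ p.2.1 = v) = true)
          = {p.1, p.2.1} := by
        ext v
        simp only [Finset.mem_filter, Finset.mem_univ, true_and, decide_eq_true_eq,
          Finset.mem_insert, Finset.mem_singleton]
        constructor
        · rintro (h | h)
          · exact Or.inl h.symm
          · exact Or.inr h.symm
        · rintro (h | h)
          · exact Or.inl h.symm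
          · exact Or.inr h.symm
      rw [hfil, Finset.card_insert_of_notMem (by simp [hends_ne p hp]),
        Finset.card_singleton]
    rw [hm2, List.map_const', List.sum_replicate, smul_eq_mul, mul_comm]
  have hc : ∀ v, D.countP (fun p => decide (p.1 = v ∨ p.2.1 = v)) = 1 := by
    by_contra hcon
    push_neg at hcon
    obtain ⟨v₀, hv₀⟩ := hcon
    have hlt : ∑ _v : V, (1 : ℕ) < ∑ v : V, D.countP (fun p => decide (p.1 = v ∨ p.2.1 = v)) :=
      Finset.sum_lt_sum (fun i _ => hge1 i)
        ⟨v₀, Finset.mem_univ _, by have := hge1 v₀; omega⟩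
    rw [hsum] at hlt
    simp only [Finset.sum_const, Finset.card_univ, smul_eq_mul, mul_one] at hlt
    omega
  refine ⟨hc, ?_⟩
  -- ## Part B
  -- the unique path through each endpoint
  have hex : ∀ v, ∃ p, p ∈ D ∧ (p.1 = v ∨ p.2.1 = v) := by
    intro v
    have h1 : 0 < D.countP (fun p => decide (p.1 = v ∨ p.2.1 = v)) := hge1 v
    rw [List.countP_pos_iff] at h1
    obtain ⟨p, hp, hpe⟩ := h1
    exact ⟨p, hp, by simpa using hpe⟩
  choose P0 hP0mem hP0end using hex
  have huniq : ∀ v p, p ∈ D → (p.1 = v ∨ p.2.1 = v) → p = P0 v := by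
    intro v p hp hpe
    exact aux_countP_unique (hc v) p hp (P0 v) (hP0mem v)
      (by simpa using hpe) (by simpa using hP0end v)
  set ι : V → V := fun v => if (P0 v).1 = v then (P0 v).2.1 else (P0 v).1 with hιdef
  have hP0ne : ∀ v, (P0 v).1 ≠ (P0 v).2.1 := fun v => hends_ne _ (hP0mem v)
  have hι_endpoints : ∀ v,
      ((P0 v).1 = v ∧ (P0 v).2.1 = ι v) ∨ ((P0 v).1 = ι v ∧ (P0 v).2.1 = v) := by
    intro v
    rcases hP0end v with h | h
    · left
      exact ⟨h, by rw [hιdef]; simp only [if_pos h]⟩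
    · by_cases h2 : (P0 v).1 = v
      · left
        exact ⟨h2, by rw [hιdef]; simp only [if_pos h2]⟩
      · right
        exact ⟨by rw [hιdef]; simp only [if_neg h2], h⟩
  have hι_ne : ∀ v, ι v ≠ v := by
    intro v hh
    rcases hι_endpoints v with ⟨h1, h2⟩ | ⟨h1, h2⟩
    · exact hP0ne v (h1.trans (h2.trans hh).symm)
    · exact hP0ne v ((h1.trans hh).trans h2.symm)
  have hP0ι : ∀ v, P0 (ι v) = P0 v := by
    intro v
    refine (huniq (ι v) (P0 v) (hP0mem v) ?_).symm
    rcases hι_endpoints v with ⟨h1, h2⟩ | ⟨h1, h2⟩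
    · exact Or.inr h2
    · exact Or.inl h1
  have hι_inv : ∀ v, ι (ι v) = v := by
    intro v
    rcases hι_endpoints (ι v) with ⟨g1, g2⟩ | ⟨g1, g2⟩ <;>
      rw [hP0ι v] at g1 g2 <;>
      rcases hι_endpoints v with ⟨h1, h2⟩ | ⟨h1, h2⟩
    · exact absurd (h1.symm.trans g1).symm (hι_ne v)
    · exact g2.symm.trans h2
    · exact g1.symm.trans h1
    · exact absurd (h2.symm.trans g2) (Ne.symm (hι_ne v))
  -- the permutation σ = μ ∘ ι and its orbit structure
  have hιinvol : Function.Involutive ι := hι_inv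
  have hμinvol : Function.Involutive μ := hμinv
  set σ : Equiv.Perm V :=
    (Function.Involutive.toPerm ι hιinvol).trans (Function.Involutive.toPerm μ hμinvol)
    with hσdef
  have hσ : ∀ v, σ v = μ (ι v) := fun _ => rfl
  have hbase : ∀ w, ι (σ w) = σ⁻¹ (ι w) := by
    intro w
    show ι (μ (ι w)) = σ⁻¹ (ι w)
    have : σ⁻¹ (ι w) = ι (μ (ι w)) := by
      rw [Equiv.Perm.inv_def]
      rfl
    rw [this]
  have hισ : ∀ (n : ℕ) (v : V), ι ((σ ^ n) v) = ((σ ^ n)⁻¹) (ι v) := by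
    intro n
    induction n with
    | zero => simp
    | succ n ih =>
      intro v
      have h1 : (σ ^ (n + 1)) v = (σ ^ n) (σ v) := by
        rw [pow_succ]
        rfl
      rw [h1, ih (σ v), hbase v]
      have h2 : (σ ^ (n + 1))⁻¹ = (σ ^ n)⁻¹ * σ⁻¹ := by
        rw [pow_succ']
        rw [mul_inv_rev]
      rw [h2]
      rfl
  have hsc : ∀ x y, σ.SameCycle x y ↔ ∃ n : ℕ, (σ ^ n) x = y := by
    intro x y
    constructor
    · intro h
      obtain ⟨i, _, hi⟩ := h.exists_pow_eq'
      exact ⟨i, hi⟩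
    · rintro ⟨n, rfl⟩
      exact ⟨n, by rw [zpow_natCast]⟩
  have hfree : ∀ v, ¬ σ.SameCycle v (ι v) := by
    intro v h
    rw [hsc] at h
    obtain ⟨n, hn⟩ := h
    rcases Nat.even_or_odd n with ⟨j, hj⟩ | ⟨j, hj⟩
    · -- n = j + j : ι would have a fixed point
      have h1 : (σ ^ n) v = (σ ^ j) ((σ ^ j) v) := by
        rw [hj, pow_add]
        rfl
      have h2 : ι ((σ ^ j) v) = (σ ^ j) v := by
        rw [hισ j, ← hn, h1]
        exact Equiv.symm_apply_apply _ _
      exact hι_ne _ h2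
    · -- n = 2j + 1 : μ would have a fixed point
      have h1 : (σ ^ n) v = (σ ^ j) (σ ((σ ^ j) v)) := by
        rw [hj, two_mul]
        rw [show j + j + 1 = j + (1 + j) by omega, pow_add, pow_add]
        rfl
      have h2 : ι ((σ ^ j) v) = σ ((σ ^ j) v) := by
        rw [hισ j, ← hn, h1]
        exact Equiv.symm_apply_apply _ _
      exact hμne _ (((hσ ((σ ^ j) v)).symm).trans h2.symm)
  -- quotient by σ-orbits
  let sc : Setoid V := ⟨σ.SameCycle,
    ⟨fun x => Equiv.Perm.SameCycle.refl σ x, fun h => h.symm, fun h1 h2 => h1.trans h2⟩⟩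
  let Q := Quotient sc
  haveI : DecidableEq Q := Classical.decEq _
  haveI : Fintype Q := @Quotient.fintype V _ sc (fun _ _ => Classical.propDecidable _)
  have hmap : ∀ a b : V, σ.SameCycle a b → σ.SameCycle (ι a) (ι b) := by
    intro a b hab
    rw [hsc] at hab
    obtain ⟨m, hm⟩ := hab
    refine Equiv.Perm.SameCycle.symm ?_
    rw [hsc]
    refine ⟨m, ?_⟩
    rw [← hm, hισ m a]
    exact Equiv.apply_symm_apply _ _
  let ιh : Q → Q := Quotient.map ι hmap
  have hQmk : ∀ v : V, ιh (Quotient.mk sc v) = Quotient.mk sc (ι v) := fun v => rfl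
  have hιhne : ∀ q : Q, ιh q ≠ q := by
    refine Quotient.ind ?_
    intro v h
    rw [hQmk] at h
    exact hfree v (Quotient.exact h).symm
  have hιhinv : ∀ q : Q, ιh (ιh q) = q := by
    refine Quotient.ind ?_
    intro v
    rw [hQmk, hQmk, hι_inv]
  let eQ := Fintype.equivFin Q
  have hκ : ∀ q : Q, (eQ q : ℕ) ≠ (eQ (ιh q) : ℕ) := by
    intro q h
    exact hιhne q (eQ.injective (Fin.val_injective h)).symm
  set S : Finset Q := Finset.univ.filter (fun q => (eQ q : ℕ) < (eQ (ιh q) : ℕ)) with hSdef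
  have hmemS : ∀ q, q ∈ S ↔ (eQ q : ℕ) < (eQ (ιh q) : ℕ) := by
    intro q
    rw [hSdef, Finset.mem_filter]
    simp
  have hS1 : ∀ q, q ∈ S ∨ ιh q ∈ S := by
    intro q
    rw [hmemS, hmemS, hιhinv q]
    have := hκ q
    omega
  have hS2 : ∀ q, q ∈ S → ιh q ∉ S := by
    intro q h1 h2
    rw [hmemS] at h1 h2
    rw [hιhinv q] at h2
    omega
  let eS : Fin S.card ≃ {x // x ∈ S} := S.equivFin.symm
  let rep : Fin S.card → V := fun t => Quotient.out (↑(eS t) : Q)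
  have hrep : ∀ t, Quotient.mk sc (rep t) = ↑(eS t) := fun t => Quotient.out_eq _
  let r : Fin S.card → ℕ := fun t => Function.minimalPeriod (⇑σ) (rep t)
  have hper : ∀ t, Function.IsPeriodicPt (⇑σ) (orderOf σ) (rep t) := by
    intro t
    show (⇑σ)^[orderOf σ] (rep t) = rep t
    rw [← Equiv.Perm.coe_pow, pow_orderOf_eq_one]
    rfl
  have hr1 : ∀ t, 1 ≤ r t :=
    fun t => Function.IsPeriodicPt.minimalPeriod_pos (orderOf_pos σ) (hper t)
  have hpow_mod : ∀ t (m : ℕ), (σ ^ (m % r t)) (rep t) = (σ ^ m) (rep t) := by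
    intro t m
    show (⇑(σ ^ (m % r t))) (rep t) = (⇑(σ ^ m)) (rep t)
    rw [Equiv.Perm.coe_pow, Equiv.Perm.coe_pow]
    exact Function.iterate_mod_minimalPeriod_eq
  let g : ∀ t : Fin S.card, ZMod (r t) → V := fun t i => (σ ^ (ZMod.val i)) (rep t)
  have hginj : ∀ t (i j : ZMod (r t)), g t i = g t j → i = j := by
    intro t i j h
    haveI : NeZero (r t) := ⟨by have := hr1 t; omega⟩
    have hi : ZMod.val i < r t := ZMod.val_lt i
    have hj : ZMod.val j < r t := ZMod.val_lt j
    have h2 : (⇑σ)^[ZMod.val i] (rep t) = (⇑σ)^[ZMod.val j] (rep t) := by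
      rw [← Equiv.Perm.coe_pow, ← Equiv.Perm.coe_pow]
      exact h
    have h3 := Function.iterate_injOn_Iio_minimalPeriod
      (Set.mem_Iio.mpr hi) (Set.mem_Iio.mpr hj) h2
    have h4 := ZMod.natCast_rightInverse (n := r t)
    rw [← h4 i, ← h4 j, h3]
  have hgsucc : ∀ t (i : ZMod (r t)), g t (i + 1) = σ (g t i) := by
    intro t i
    haveI : NeZero (r t) := ⟨by have := hr1 t; omega⟩
    have hval : ZMod.val (i + 1) = (ZMod.val i + 1) % r t := by
      rw [ZMod.val_add, ZMod.val_one_eq_one_mod]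
      conv_rhs => rw [Nat.add_mod, Nat.mod_eq_of_lt (ZMod.val_lt i)]
    show (σ ^ (ZMod.val (i + 1))) (rep t) = σ ((σ ^ (ZMod.val i)) (rep t))
    rw [hval, hpow_mod, pow_succ']
    rfl
  have hgclass : ∀ t (i : ZMod (r t)), Quotient.mk sc (g t i) = ↑(eS t) := by
    intro t i
    rw [← hrep t]
    refine Quotient.sound ?_
    exact (Equiv.Perm.SameCycle.symm ((hsc (rep t) (g t i)).mpr ⟨ZMod.val i, rfl⟩))
  have hgex : ∀ t (v : V), Quotient.mk sc v = ↑(eS t) → ∃ i : ZMod (r t), g t i = v := by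
    intro t v h
    haveI : NeZero (r t) := ⟨by have := hr1 t; omega⟩
    have h2 : σ.SameCycle (rep t) v := Quotient.exact ((hrep t).trans h.symm)
    rw [hsc] at h2
    obtain ⟨m, hm⟩ := h2
    refine ⟨(m : ZMod (r t)), ?_⟩
    show (σ ^ (ZMod.val ((m : ℕ) : ZMod (r t)))) (rep t) = v
    rw [ZMod.val_natCast, hpow_mod, hm]
  have hgt_eq : ∀ (t s : Fin S.card) (i : ZMod (r t)) (j : ZMod (r s)), g t i = g s j →
      (⟨t, i⟩ : Σ t : Fin S.card, ZMod (r t)) = ⟨s, j⟩ := by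
    intro t s i j h
    have hts : t = s := by
      have h1 : (↑(eS t) : Q) = ↑(eS s) := by rw [← hgclass t i, ← hgclass s j, h]
      exact eS.injective (Subtype.ext h1)
    subst hts
    rw [hginj t i j h]
  have hcross : ∀ (t s : Fin S.card) (i : ZMod (r t)) (j : ZMod (r s)),
      ι (g t i) = g s j → False := by
    intro t s i j h
    have h2 : ιh (↑(eS t)) = ↑(eS s) := by
      rw [← hgclass t i, ← hgclass s j, ← h, hQmk]
    exact hS2 _ (eS t).2 (h2 ▸ (eS s).2)
  let Pf : ∀ t : Fin S.card, ZMod (r t) → Σ u : V, Σ v : V, (G.deleteEdges M.edgeSet).Walk u v :=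
    fun t i => P0 (g t i)
  let ef : ∀ t : Fin S.card, ZMod (r t) → Sym2 V := fun t i => s(ι (g t i), σ (g t i))
  have hC1 : ∀ t i, Pf t i ∈ D := fun t i => hP0mem _
  have hC2 : ∀ t i, ef t i ∈ M.edgeSet := by
    intro t i
    refine SimpleGraph.Subgraph.mem_edgeSet.mpr ?_
    rw [hσ]
    exact hμ1 _
  have hC3 : Function.Injective (fun ti : Σ t : Fin S.card, ZMod (r t) => ef ti.1 ti.2) := by
    rintro ⟨t, i⟩ ⟨s', j⟩ h
    simp only [ef] at h
    rw [Sym2.eq_iff] at h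
    rcases h with ⟨h1, _⟩ | ⟨h1, _⟩
    · exact hgt_eq t s' i j (hιinvol.injective h1)
    · exact (hcross t s' i (j + 1) (by rw [hgsucc s' j]; exact h1)).elim
  have hC4 : ∀ t i, ∃ x y, ef t i = s(x, y) ∧
      (x = (Pf t i).1 ∨ x = (Pf t i).2.1) ∧
      (y = (Pf t (i + 1)).1 ∨ y = (Pf t (i + 1)).2.1) := by
    intro t i
    refine ⟨ι (g t i), σ (g t i), rfl, ?_, ?_⟩
    · rcases hι_endpoints (g t i) with ⟨h1, h2⟩ | ⟨h1, h2⟩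
      · exact Or.inr h2.symm
      · exact Or.inl h1.symm
    · rw [← hgsucc t i]
      rcases hP0end (g t (i + 1)) with h | h
      · exact Or.inl h.symm
      · exact Or.inr h.symm
  have hG'e : (G.deleteEdges M.edgeSet).edgeSet = G.edgeSet \ M.edgeSet :=
    SimpleGraph.edgeSet_deleteEdges _
  have hMsub : M.edgeSet ⊆ G.edgeSet := SimpleGraph.Subgraph.edgeSet_subset M
  have hPnotM : ∀ (t : Fin S.card) (i : ZMod (r t)) (e' : Sym2 V),
      e' ∈ (P0 (g t i)).2.2.edges → e' ∈ G.edgeSet ∧ e' ∉ M.edgeSet := by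
    intro t i e' he'
    have h1 := SimpleGraph.Walk.edges_subset_edgeSet _ he'
    rw [hG'e] at h1
    exact h1
  have hpwsym : ∀ a ∈ D, ∀ b ∈ D, a ≠ b → ∀ e' ∈ a.2.2.edges, e' ∉ b.2.2.edges := by
    intro a ha b hb hab
    haveI : Std.Symm (fun p q : (Σ u : V, Σ v : V, (G.deleteEdges M.edgeSet).Walk u v) =>
        ∀ e ∈ p.2.2.edges, e ∉ q.2.2.edges) := ⟨fun a' b' h e' h1 h2 => h e' h2 h1⟩
    exact hpw.forall ha hb hab
  have hC5 : ∀ e, e ∈ G.edgeSet ↔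
      ∃! ti : Σ t : Fin S.card, ZMod (r t), e ∈ (Pf ti.1 ti.2).2.2.edges ∨ e = ef ti.1 ti.2 := by
    intro e
    constructor
    · intro he
      by_cases heM : e ∈ M.edgeSet
      · -- a matching edge
        obtain ⟨x, y, rfl⟩ := Sym2.ind (f := fun z => ∃ x y, z = s(x, y))
          (fun a b => ⟨a, b, rfl⟩) e
        have hMxy : M.Adj x y := SimpleGraph.Subgraph.mem_edgeSet.mp heM
        have hyx : y = μ x := hμ2 x y hMxy
        subst hyx
        have hkey : ∃ (t : Fin S.card) (i : ZMod (r t)), ef t i = s(x, μ x) := by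
          rcases hS1 (Quotient.mk sc (ι x)) with hq | hq
          · obtain ⟨i, hi⟩ := hgex (eS.symm ⟨_, hq⟩) (ι x) (by simp)
            refine ⟨eS.symm ⟨_, hq⟩, i, ?_⟩
            show s(ι (g _ i), σ (g _ i)) = s(x, μ x)
            rw [hi, hι_inv, hσ, hι_inv]
          · rw [hQmk, hι_inv] at hq
            have hxm : Quotient.mk sc (ι (μ x)) = Quotient.mk sc x := by
              refine Quotient.sound ?_
              show σ.SameCycle (ι (μ x)) x
              rw [hsc]
              exact ⟨1, by rw [pow_one, hσ, hι_inv, hμinv]⟩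
            obtain ⟨i, hi⟩ := hgex (eS.symm ⟨_, hq⟩) (ι (μ x)) (hxm.trans (by simp))
            refine ⟨eS.symm ⟨_, hq⟩, i, ?_⟩
            show s(ι (g _ i), σ (g _ i)) = s(x, μ x)
            rw [hi, hι_inv, hσ, hι_inv, hμinv]
            exact Sym2.eq_swap
        obtain ⟨t, i, hti⟩ := hkey
        refine ⟨⟨t, i⟩, Or.inr hti.symm, ?_⟩
        rintro ⟨s', j⟩ (hsj | hsj)
        · exact ((hPnotM s' j _ hsj).2 heM).elim
        · exact hC3 (show ef s' j = ef t i from hsj.symm.trans hti.symm)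
      · -- a path edge
        have he' : e ∈ (G.deleteEdges M.edgeSet).edgeSet := by
          rw [hG'e]
          exact ⟨he, heM⟩
        obtain ⟨p, hp, hep⟩ := (hpart e).mp he'
        have hpP0 : p = P0 p.1 := huniq p.1 p hp (Or.inl rfl)
        have ha : p.1 = (P0 p.1).1 := by conv_lhs => rw [hpP0]
        have hb : p.2.1 = (P0 p.1).2.1 := by conv_lhs => rw [hpP0]
        have hsnd : p.2.1 = ι p.1 := by
          rcases hι_endpoints p.1 with ⟨h1, h2⟩ | ⟨h1, h2⟩
          · exact hb.trans h2
          · exact absurd (ha.trans h1).symm (hι_ne p.1)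
        have hkey : ∃ (t : Fin S.card) (i : ZMod (r t)), g t i = p.1 ∨ g t i = ι p.1 := by
          rcases hS1 (Quotient.mk sc p.1) with hq | hq
          · obtain ⟨i, hi⟩ := hgex (eS.symm ⟨_, hq⟩) p.1 (by simp)
            exact ⟨eS.symm ⟨_, hq⟩, i, Or.inl hi⟩
          · rw [hQmk] at hq
            obtain ⟨i, hi⟩ := hgex (eS.symm ⟨_, hq⟩) (ι p.1) (by simp)
            exact ⟨eS.symm ⟨_, hq⟩, i, Or.inr hi⟩
        obtain ⟨t, i, hti⟩ := hkey
        have hPfp : P0 (g t i) = p := by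
          rcases hti with h | h
          · rw [h, ← hpP0]
          · rw [h, hP0ι, ← hpP0]
        refine ⟨⟨t, i⟩, Or.inl (by show e ∈ (P0 (g t i)).2.2.edges; rw [hPfp]; exact hep), ?_⟩
        rintro ⟨s', j⟩ (hsj | hsj)
        · have hq' : P0 (g s' j) = p := by
            by_contra hne
            exact hpwsym _ (hP0mem _) _ hp hne e hsj hep
          have hend : g s' j = p.1 ∨ g s' j = ι p.1 := by
            rcases hP0end (g s' j) with h | h
            · rw [hq'] at h
              exact Or.inl h.symm
            · rw [hq'] at h
              exact Or.inr (h.symm.trans hsnd)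
          rcases hti with h1 | h1 <;> rcases hend with h2 | h2
          · exact hgt_eq s' t j i (h2.trans h1.symm)
          · exact (hcross t s' i j (by rw [h1, h2])).elim
          · exact (hcross s' t j i (by rw [h2, ← h1])).elim
          · exact hgt_eq s' t j i (h2.trans h1.symm)
        · exact ((heM (by rw [hsj]; exact hC2 s' j)).elim)
    · rintro ⟨⟨t, i⟩, hti | hti, -⟩
      · exact (hPnotM t i e hti).1
      · rw [hti]
        exact hMsub (hC2 t i)
  exact ⟨S.card, r, hr1, Pf, ef, hC1, hC2, hC3, hC4, hC5⟩
end

section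
/- Let k > 3 and let P, P′ be two edge-disjoint paths, each of length 2k−1, in a graph of girth at least 2k−2, such that there is an edge e = xx′ with x an end vertex of P, x′ an end vertex of P′, and both x′ ∈ V(P) is internal in P and x ∈ V(P′) is internal in P′ (i.e., e is trapped). If |V(P) ∩ V(P′)| > 2, then |V(P) ∩ V(P′)| = 3, the subpath of P from x to x′ and the subpath of P′ from x to x′ each have length 2k−2, and the middle vertex of the subpath P(x,x′) equals the middle vertex of the subpath P′(x,x′). -/
open SimpleGraph Walk

private lemma length_take_add_drop' {V : Type*} [DecidableEq V] {G : SimpleGraph V}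
    {u v w : V} (p : G.Walk v w) (h : u ∈ p.support) :
    (p.takeUntil u h).length + (p.dropUntil u h).length = p.length := by
  conv_rhs => rw [← Walk.take_spec p h]
  rw [Walk.length_append]

private lemma exists_cycle_of_closed_trail' {V : Type*} [DecidableEq V] {G : SimpleGraph V} :
    ∀ (n : ℕ) {v : V} (w : G.Walk v v), w.length ≤ n → w.IsTrail → w.length ≠ 0 →
    ∃ (a : V) (c : G.Walk a a), c.IsCycle ∧ c.length ≤ w.length := by
  intro n
  induction n with
  | zero => intro v w hw ht h0; omega
  | succ n ih =>
    intro v w hw ht h0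
    by_cases hnd : w.support.tail.Nodup
    · refine ⟨v, w, ⟨⟨ht, fun hnil => ?_⟩, hnd⟩, le_rfl⟩
      rw [hnil] at h0; simp at h0
    · obtain ⟨c, hc⟩ := List.exists_duplicate_iff_not_nodup.2 hnd
      rw [List.duplicate_iff_two_le_count] at hc
      have hcmem : c ∈ w.support := by
        apply List.mem_of_mem_tail
        exact List.count_pos_iff.mp (by omega)
      have hrt : (w.rotate c hcmem).IsTrail := ht.rotate hcmem
      have hrlen : (w.rotate c hcmem).length = w.length := by
        show ((w.dropUntil c hcmem).append (w.takeUntil c hcmem)).length = w.length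
        rw [Walk.length_append, Nat.add_comm, length_take_add_drop']
      have hcount : 2 ≤ (w.rotate c hcmem).support.tail.count c := by
        rw [List.Perm.count_eq ((Walk.support_rotate w c hcmem).perm)]
        exact hc
      have hrnil : ¬ (w.rotate c hcmem).Nil := by
        rw [Walk.not_nil_iff_lt_length, hrlen]; omega
      obtain ⟨d, hadj, p, hp⟩ := Walk.not_nil_iff.mp hrnil
      have hps : (w.rotate c hcmem).support.tail = p.support := by
        rw [hp, Walk.support_cons]
        rfl
      rw [hps] at hcount
      have hcp : c ∈ p.support := List.count_pos_iff.mp (by omega)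
      -- the trail property of rotate, via hp
      have hpt : (Walk.cons hadj p).IsTrail := hp ▸ hrt
      have hpedges : p.edges.Nodup ∧ s(c, d) ∉ p.edges := by
        have := hpt.edges_nodup
        rw [Walk.edges_cons, List.nodup_cons] at this
        exact ⟨this.2, this.1⟩
      have hptrail : p.IsTrail := ⟨hpedges.1⟩
      -- dropUntil has positive length
      have hdpos : 1 ≤ (p.dropUntil c hcp).length := by
        by_contra hcon
        have h00 : (p.dropUntil c hcp).length = 0 := by omega
        have hc1 := Walk.count_support_takeUntil_eq_one p hcp
        have hsupp : p.support = (p.takeUntil c hcp).support ++ (p.dropUntil c hcp).support.tail := by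
          conv_lhs => rw [← Walk.take_spec p hcp]
          rw [Walk.support_append]
        have htail : (p.dropUntil c hcp).support.tail = [] := by
          have := Walk.length_support (p.dropUntil c hcp)
          have hl : (p.dropUntil c hcp).support.length = 1 := by omega
          cases hdd : (p.dropUntil c hcp).support with
          | nil => simp [hdd] at hl
          | cons a l => rw [hdd] at hl; simp at hl; simp [hl]
        rw [hsupp, htail, List.append_nil, hc1] at hcount
        omega
      have htlen : (p.takeUntil c hcp).length + (p.dropUntil c hcp).length = p.length :=
        length_take_add_drop' p hcp
      -- new smaller closed trail
      have hnewtrail : (Walk.cons hadj (p.takeUntil c hcp)).IsTrail := by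
        rw [Walk.isTrail_def, Walk.edges_cons, List.nodup_cons]
        exact ⟨fun hmem => hpedges.2 (Walk.edges_takeUntil_subset p hcp hmem),
          (hptrail.takeUntil hcp).edges_nodup⟩
      have hplen : p.length + 1 = w.length := by
        rw [← hrlen, hp]; simp
      obtain ⟨a, cyc, hcyc, hclen⟩ := ih (Walk.cons hadj (p.takeUntil c hcp))
        (by rw [Walk.length_cons]; omega) hnewtrail (by rw [Walk.length_cons]; omega)
      exact ⟨a, cyc, hcyc, by rw [Walk.length_cons] at hclen; omega⟩

private lemma le_length_of_closed_trail' {V : Type*} [DecidableEq V] {G : SimpleGraph V} {m : ℕ}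
    (hg : (m : ℕ∞) ≤ G.girth) {v : V} (w : G.Walk v v) (ht : w.IsTrail)
    (h0 : w.length ≠ 0) : m ≤ w.length := by
  obtain ⟨a, c, hc, hcl⟩ := exists_cycle_of_closed_trail' w.length w le_rfl ht h0
  have h1 : G.egirth ≤ (c.length : ℕ∞) :=
    iInf_le_of_le a (iInf_le_of_le c (iInf_le _ hc))
  have hne : G.egirth ≠ ⊤ := by
    intro h; rw [h, top_le_iff] at h1
    exact ENat.coe_ne_top _ h1
  have h2 : (G.girth : ℕ∞) = G.egirth := ENat.coe_toNat hne
  rw [h2] at hg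
  have h3 : (m : ℕ∞) ≤ (c.length : ℕ∞) := hg.trans h1
  have := Nat.cast_le.mp h3
  omega

private lemma aux_two {V : Type*} [DecidableEq V] {G : SimpleGraph V} {m : ℕ}
    (hg : (m : ℕ∞) ≤ G.girth) {a b : V} (p1 : G.Walk a b) (p2 : G.Walk b a)
    (h1 : p1.edges.Nodup) (h2 : p2.edges.Nodup)
    (h12 : ∀ e ∈ p1.edges, e ∉ p2.edges) (hpos : p1.length ≠ 0) :
    m ≤ p1.length + p2.length := by
  have ht : (p1.append p2).IsTrail := by
    rw [Walk.isTrail_def, Walk.edges_append, List.nodup_append]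
    exact ⟨h1, h2, fun a ha b hb hab => h12 a ha (hab ▸ hb)⟩
  have := le_length_of_closed_trail' hg (p1.append p2) ht
    (by rw [Walk.length_append]; omega)
  rw [Walk.length_append] at this
  exact this

private lemma aux_three {V : Type*} [DecidableEq V] {G : SimpleGraph V} {m : ℕ}
    (hg : (m : ℕ∞) ≤ G.girth) {a b c : V} (p1 : G.Walk a b) (p2 : G.Walk b c) (p3 : G.Walk c a)
    (h1 : p1.edges.Nodup) (h2 : p2.edges.Nodup) (h3 : p3.edges.Nodup)
    (h12 : ∀ e ∈ p1.edges, e ∉ p2.edges)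
    (h13 : ∀ e ∈ p1.edges, e ∉ p3.edges)
    (h23 : ∀ e ∈ p2.edges, e ∉ p3.edges) (hpos : p1.length ≠ 0) :
    m ≤ p1.length + p2.length + p3.length := by
  have ht : (p1.append (p2.append p3)).IsTrail := by
    rw [Walk.isTrail_def, Walk.edges_append, Walk.edges_append, List.nodup_append]
    refine ⟨h1, List.nodup_append.2 ⟨h2, h3, fun a ha b hb hab => h23 a ha (hab ▸ hb)⟩, ?_⟩
    intro e he1 b he23 hab; subst hab
    rcases List.mem_append.mp he23 with h | h
    · exact h12 e he1 h
    · exact h13 e he1 h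
  have := le_length_of_closed_trail' hg (p1.append (p2.append p3)) ht
    (by rw [Walk.length_append, Walk.length_append]; omega)
  rw [Walk.length_append, Walk.length_append] at this
  omega

/-- For `k > 3`, in a graph of girth at least `2k-2`, let `P, P'` be
edge-disjoint paths of length `2k-1`, and `e = xx'` an edge with `x` an end vertex
of `P`, `x'` an end vertex of `P'`, such that `x'` is internal in `P` and `x` is
internal in `P'` (a trapped edge).  If `|V(P) ∩ V(P')| > 2`, then
`|V(P) ∩ V(P')| = 3`, the segments `P(x,x')` and `P'(x,x')` both have length
`2k-2`, and their middle vertices coincide. -/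
theorem stmt13 {V : Type*} [DecidableEq V] (k : ℕ) (hk : 3 < k)
    (G : SimpleGraph V)
    (hgirth : ((2 * k - 2 : ℕ) : ℕ∞) ≤ G.girth)
    {u x x' w : V}
    (P : G.Walk u x) (P' : G.Walk x' w)
    (hP : P.IsPath) (hP' : P'.IsPath)
    (hPlen : P.length = 2 * k - 1) (hP'len : P'.length = 2 * k - 1)
    (hdisj : ∀ e ∈ P.edges, e ∉ P'.edges)
    (he : G.Adj x x')
    (heP : s(x, x') ∉ P.edges) (heP' : s(x, x') ∉ P'.edges)
    (hx' : x' ∈ P.support) (hx'int : x' ≠ u ∧ x' ≠ x)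
    (hx : x ∈ P'.support) (hxint : x ≠ x' ∧ x ≠ w)
    (hbig : 2 < (P.support.toFinset ∩ P'.support.toFinset).card) :
    (P.support.toFinset ∩ P'.support.toFinset).card = 3 ∧
    (P.dropUntil x' hx').length = 2 * k - 2 ∧
    (P'.takeUntil x hx).length = 2 * k - 2 ∧
    (P.dropUntil x' hx').getVert (k - 1) = (P'.takeUntil x hx).getVert (k - 1) := by
  obtain ⟨hx'u, hx'x⟩ := hx'int
  obtain ⟨hxx', hxw⟩ := hxint
  have h2k : 4 ≤ k := hk
  -- basic path facts
  have hApath : (P.takeUntil x' hx').IsPath := hP.takeUntil hx'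
  have hQpath : (P.dropUntil x' hx').IsPath := hP.dropUntil hx'
  have hTpath : (P'.takeUntil x hx).IsPath := hP'.takeUntil hx
  have hRpath : (P'.dropUntil x hx).IsPath := hP'.dropUntil hx
  have hAsub : (P.takeUntil x' hx').edges ⊆ P.edges := Walk.edges_takeUntil_subset P hx'
  have hQsub : (P.dropUntil x' hx').edges ⊆ P.edges := Walk.edges_dropUntil_subset P hx'
  have hTsub : (P'.takeUntil x hx).edges ⊆ P'.edges := Walk.edges_takeUntil_subset P' hx
  have hRsub : (P'.dropUntil x hx).edges ⊆ P'.edges := Walk.edges_dropUntil_subset P' hx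
  have hAQlen : (P.takeUntil x' hx').length + (P.dropUntil x' hx').length = 2 * k - 1 := by
    rw [length_take_add_drop' P hx']; exact hPlen
  have hTRlen : (P'.takeUntil x hx).length + (P'.dropUntil x hx).length = 2 * k - 1 := by
    rw [length_take_add_drop' P' hx]; exact hP'len
  have hApos : (P.takeUntil x' hx').length ≠ 0 :=
    fun h0 => hx'u (Walk.eq_of_length_eq_zero h0).symm
  have hQpos : (P.dropUntil x' hx').length ≠ 0 :=
    fun h0 => hx'x (Walk.eq_of_length_eq_zero h0)
  have hTpos : (P'.takeUntil x hx).length ≠ 0 :=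
    fun h0 => hxx' (Walk.eq_of_length_eq_zero h0).symm
  have hRpos : (P'.dropUntil x hx).length ≠ 0 :=
    fun h0 => hxw (Walk.eq_of_length_eq_zero h0)
  -- the edge walks
  have hewE : (Walk.cons he Walk.nil).edges = [s(x, x')] := by simp
  have hew'E : (Walk.cons he.symm Walk.nil).edges = [s(x, x')] := by
    simp [Sym2.eq_swap]
  have hewlen : (Walk.cons he Walk.nil : G.Walk x x').length = 1 := by simp
  have hew'len : (Walk.cons he.symm Walk.nil : G.Walk x' x).length = 1 := by simp
  have hewnd : (Walk.cons he Walk.nil : G.Walk x x').edges.Nodup := by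
    rw [hewE]; exact List.nodup_singleton _
  have hew'nd : (Walk.cons he.symm Walk.nil : G.Walk x' x).edges.Nodup := by
    rw [hew'E]; exact List.nodup_singleton _
  -- reverse helpers
  have revsub : ∀ {a b : V} {q : G.Walk a b} {L : List (Sym2 V)},
      q.edges ⊆ L → q.reverse.edges ⊆ L := by
    intro a b q L h e hee
    rw [Walk.edges_reverse, List.mem_reverse] at hee
    exact h hee
  have revnd : ∀ {a b : V} {q : G.Walk a b}, q.edges.Nodup → q.reverse.edges.Nodup := by
    intro a b q h
    rw [Walk.edges_reverse]
    exact List.nodup_reverse.mpr h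
  -- global cycle bounds through the edge
  have hEbound : 2 * k - 2 ≤ (P.dropUntil x' hx').length + 1 := by
    have := aux_two hgirth (P.dropUntil x' hx') (Walk.cons he Walk.nil)
      hQpath.isTrail.edges_nodup hewnd
      (fun e he1 he2 => by
        rw [hewE, List.mem_singleton] at he2; subst he2; exact heP (hQsub he1)) hQpos
    rwa [hewlen] at this
  have hFbound : 2 * k - 2 ≤ (P'.takeUntil x hx).length + 1 := by
    have := aux_two hgirth (P'.takeUntil x hx) (Walk.cons he Walk.nil)
      hTpath.isTrail.edges_nodup hewnd
      (fun e he1 he2 => by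
        rw [hewE, List.mem_singleton] at he2; subst he2; exact heP' (hTsub he1)) hTpos
    rwa [hewlen] at this
  -- key claim about any third common vertex
  have key : ∀ y : V, y ∈ P.support → y ∈ P'.support → y ≠ x → y ≠ x' →
      (P.dropUntil x' hx').length = 2 * k - 2 ∧ (P'.takeUntil x hx).length = 2 * k - 2 ∧
      (P.dropUntil x' hx').getVert (k - 1) = y ∧ (P'.takeUntil x hx).getVert (k - 1) = y := by
    intro y hyP hyP' hyx hyx'
    have hyPQ : y ∈ (P.takeUntil x' hx').support ∨ y ∈ (P.dropUntil x' hx').support := by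
      rw [← Walk.mem_support_append_iff, Walk.take_spec]; exact hyP
    have hyTR : y ∈ (P'.takeUntil x hx).support ∨ y ∈ (P'.dropUntil x hx).support := by
      rw [← Walk.mem_support_append_iff, Walk.take_spec]; exact hyP'
    rcases hyPQ with hyA | hyQ
    · -- y is on the initial segment of P : contradiction
      have hAdysub : ((P.takeUntil x' hx').dropUntil y hyA).edges ⊆ P.edges :=
        fun e hee => hAsub (Walk.edges_dropUntil_subset _ hyA hee)
      have hAdynd := (hApath.dropUntil hyA).isTrail.edges_nodup
      have hAdypos : ((P.takeUntil x' hx').dropUntil y hyA).length ≠ 0 :=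
        fun h0 => hyx' (Walk.eq_of_length_eq_zero h0)
      have hAdyle : ((P.takeUntil x' hx').dropUntil y hyA).length ≤ (P.takeUntil x' hx').length :=
        Walk.length_dropUntil_le _ hyA
      exfalso
      rcases hyTR with hyT | hyR
      · -- y on T
        have hT1nd := (hTpath.takeUntil hyT).isTrail.edges_nodup
        have hT2nd := (hTpath.dropUntil hyT).isTrail.edges_nodup
        have hT1sub : ((P'.takeUntil x hx).takeUntil y hyT).edges ⊆ P'.edges :=
          fun e hee => hTsub (Walk.edges_takeUntil_subset _ hyT hee)
        have hT2sub : ((P'.takeUntil x hx).dropUntil y hyT).edges ⊆ P'.edges :=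
          fun e hee => hTsub (Walk.edges_dropUntil_subset _ hyT hee)
        have hT2pos : ((P'.takeUntil x hx).dropUntil y hyT).length ≠ 0 :=
          fun h0 => hyx (Walk.eq_of_length_eq_zero h0)
        have hTsplit := length_take_add_drop' (P'.takeUntil x hx) hyT
        have c1 := aux_two hgirth ((P.takeUntil x' hx').dropUntil y hyA)
          ((P'.takeUntil x hx).takeUntil y hyT) hAdynd hT1nd
          (fun e he1 he2 => hdisj e (hAdysub he1) (hT1sub he2)) hAdypos
        have c2 := aux_three hgirth ((P'.takeUntil x hx).dropUntil y hyT)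
          (Walk.cons he Walk.nil) ((P.takeUntil x' hx').dropUntil y hyA).reverse
          hT2nd hewnd (revnd hAdynd)
          (fun e he1 he2 => by
            rw [hewE, List.mem_singleton] at he2; subst he2; exact heP' (hT2sub he1))
          (fun e he1 he2 => hdisj e (revsub hAdysub he2) (hT2sub he1))
          (fun e he1 he2 => by
            rw [hewE, List.mem_singleton] at he1; subst he1; exact heP (revsub hAdysub he2))
          hT2pos
        rw [hewlen, Walk.length_reverse] at c2
        omega
      · -- y on R
        have hRtynd := (hRpath.takeUntil hyR).isTrail.edges_nodup
        have hRtysub : ((P'.dropUntil x hx).takeUntil y hyR).edges ⊆ P'.edges :=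
          fun e hee => hRsub (Walk.edges_takeUntil_subset _ hyR hee)
        have hRtyle : ((P'.dropUntil x hx).takeUntil y hyR).length ≤ (P'.dropUntil x hx).length :=
          Walk.length_takeUntil_le _ hyR
        have c := aux_three hgirth ((P.takeUntil x' hx').dropUntil y hyA)
          (Walk.cons he.symm Walk.nil) ((P'.dropUntil x hx).takeUntil y hyR)
          hAdynd hew'nd hRtynd
          (fun e he1 he2 => by
            rw [hew'E, List.mem_singleton] at he2; subst he2; exact heP (hAdysub he1))
          (fun e he1 he2 => hdisj e (hAdysub he1) (hRtysub he2))
          (fun e he1 he2 => by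
            rw [hew'E, List.mem_singleton] at he1; subst he1; exact heP' (hRtysub he2))
          hAdypos
        rw [hew'len] at c
        omega
    · -- y is on Q
      have hQ1nd := (hQpath.takeUntil hyQ).isTrail.edges_nodup
      have hQ2nd := (hQpath.dropUntil hyQ).isTrail.edges_nodup
      have hQ1sub : ((P.dropUntil x' hx').takeUntil y hyQ).edges ⊆ P.edges :=
        fun e hee => hQsub (Walk.edges_takeUntil_subset _ hyQ hee)
      have hQ2sub : ((P.dropUntil x' hx').dropUntil y hyQ).edges ⊆ P.edges :=
        fun e hee => hQsub (Walk.edges_dropUntil_subset _ hyQ hee)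
      have hQ1pos : ((P.dropUntil x' hx').takeUntil y hyQ).length ≠ 0 :=
        fun h0 => hyx' (Walk.eq_of_length_eq_zero h0).symm
      have hQ2pos : ((P.dropUntil x' hx').dropUntil y hyQ).length ≠ 0 :=
        fun h0 => hyx (Walk.eq_of_length_eq_zero h0)
      have hQsplit := length_take_add_drop' (P.dropUntil x' hx') hyQ
      rcases hyTR with hyT | hyR
      · -- main case : y on Q and on T
        have hT1nd := (hTpath.takeUntil hyT).isTrail.edges_nodup
        have hT2nd := (hTpath.dropUntil hyT).isTrail.edges_nodup
        have hT1sub : ((P'.takeUntil x hx).takeUntil y hyT).edges ⊆ P'.edges :=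
          fun e hee => hTsub (Walk.edges_takeUntil_subset _ hyT hee)
        have hT2sub : ((P'.takeUntil x hx).dropUntil y hyT).edges ⊆ P'.edges :=
          fun e hee => hTsub (Walk.edges_dropUntil_subset _ hyT hee)
        have hT1pos : ((P'.takeUntil x hx).takeUntil y hyT).length ≠ 0 :=
          fun h0 => hyx' (Walk.eq_of_length_eq_zero h0).symm
        have hT2pos : ((P'.takeUntil x hx).dropUntil y hyT).length ≠ 0 :=
          fun h0 => hyx (Walk.eq_of_length_eq_zero h0)
        have hTsplit := length_take_add_drop' (P'.takeUntil x hx) hyT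
        have cA := aux_two hgirth ((P.dropUntil x' hx').takeUntil y hyQ)
          ((P'.takeUntil x hx).takeUntil y hyT).reverse hQ1nd (revnd hT1nd)
          (fun e he1 he2 => hdisj e (hQ1sub he1) (revsub hT1sub he2)) hQ1pos
        rw [Walk.length_reverse] at cA
        have cB := aux_two hgirth ((P.dropUntil x' hx').dropUntil y hyQ)
          ((P'.takeUntil x hx).dropUntil y hyT).reverse hQ2nd (revnd hT2nd)
          (fun e he1 he2 => hdisj e (hQ2sub he1) (revsub hT2sub he2)) hQ2pos
        rw [Walk.length_reverse] at cB
        have cC := aux_three hgirth ((P.dropUntil x' hx').takeUntil y hyQ)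
          ((P'.takeUntil x hx).dropUntil y hyT) (Walk.cons he Walk.nil)
          hQ1nd hT2nd hewnd
          (fun e he1 he2 => hdisj e (hQ1sub he1) (hT2sub he2))
          (fun e he1 he2 => by
            rw [hewE, List.mem_singleton] at he2; subst he2; exact heP (hQ1sub he1))
          (fun e he1 he2 => by
            rw [hewE, List.mem_singleton] at he2; subst he2; exact heP' (hT2sub he1))
          hQ1pos
        rw [hewlen] at cC
        have cD := aux_three hgirth ((P.dropUntil x' hx').dropUntil y hyQ)
          (Walk.cons he Walk.nil) ((P'.takeUntil x hx).takeUntil y hyT)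
          hQ2nd hewnd hT1nd
          (fun e he1 he2 => by
            rw [hewE, List.mem_singleton] at he2; subst he2; exact heP (hQ2sub he1))
          (fun e he1 he2 => hdisj e (hQ2sub he1) (hT1sub he2))
          (fun e he1 he2 => by
            rw [hewE, List.mem_singleton] at he1; subst he1; exact heP' (hT1sub he2))
          hQ2pos
        rw [hewlen] at cD
        have hQ1len : ((P.dropUntil x' hx').takeUntil y hyQ).length = k - 1 := by omega
        have hT1len : ((P'.takeUntil x hx).takeUntil y hyT).length = k - 1 := by omega
        refine ⟨by omega, by omega, ?_, ?_⟩
        · conv_lhs => rw [← Walk.take_spec (P.dropUntil x' hx') hyQ]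
          rw [Walk.getVert_append, hQ1len]
          simp
        · conv_lhs => rw [← Walk.take_spec (P'.takeUntil x hx) hyT]
          rw [Walk.getVert_append, hT1len]
          simp
      · -- y on Q and on R : contradiction
        exfalso
        have hRtynd := (hRpath.takeUntil hyR).isTrail.edges_nodup
        have hRtysub : ((P'.dropUntil x hx).takeUntil y hyR).edges ⊆ P'.edges :=
          fun e hee => hRsub (Walk.edges_takeUntil_subset _ hyR hee)
        have hRtyle : ((P'.dropUntil x hx).takeUntil y hyR).length ≤ (P'.dropUntil x hx).length :=
          Walk.length_takeUntil_le _ hyR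
        have c1 := aux_two hgirth ((P.dropUntil x' hx').dropUntil y hyQ)
          ((P'.dropUntil x hx).takeUntil y hyR) hQ2nd hRtynd
          (fun e he1 he2 => hdisj e (hQ2sub he1) (hRtysub he2)) hQ2pos
        have c2 := aux_three hgirth ((P.dropUntil x' hx').takeUntil y hyQ)
          ((P'.dropUntil x hx).takeUntil y hyR).reverse (Walk.cons he Walk.nil)
          hQ1nd (revnd hRtynd) hewnd
          (fun e he1 he2 => hdisj e (hQ1sub he1) (revsub hRtysub he2))
          (fun e he1 he2 => by
            rw [hewE, List.mem_singleton] at he2; subst he2; exact heP (hQ1sub he1))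
          (fun e he1 he2 => by
            rw [hewE, List.mem_singleton] at he2; subst he2; exact heP' (revsub hRtysub he1))
          hQ1pos
        rw [hewlen, Walk.length_reverse] at c2
        omega
  -- produce a third common vertex
  have hxS : x ∈ P.support.toFinset ∩ P'.support.toFinset := by
    rw [Finset.mem_inter, List.mem_toFinset, List.mem_toFinset]
    exact ⟨Walk.end_mem_support P, hx⟩
  have hx'S : x' ∈ P.support.toFinset ∩ P'.support.toFinset := by
    rw [Finset.mem_inter, List.mem_toFinset, List.mem_toFinset]
    exact ⟨hx', Walk.start_mem_support P'⟩
  have hex : ∃ y ∈ P.support.toFinset ∩ P'.support.toFinset, y ≠ x ∧ y ≠ x' := by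
    by_contra hcon
    push_neg at hcon
    have hsub : P.support.toFinset ∩ P'.support.toFinset ⊆ ({x, x'} : Finset V) := by
      intro z hz
      rcases eq_or_ne z x with rfl | hzx
      · exact Finset.mem_insert_self _ _
      · rw [Finset.mem_insert, Finset.mem_singleton]
        exact Or.inr (hcon z hz hzx)
    have hcard := Finset.card_le_card hsub
    have h2 : ({x, x'} : Finset V).card ≤ 2 := Finset.card_le_two
    omega
  obtain ⟨y, hyS, hyx, hyx'⟩ := hex
  have hyPP' : y ∈ P.support ∧ y ∈ P'.support := by
    rw [Finset.mem_inter, List.mem_toFinset, List.mem_toFinset] at hyS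
    exact hyS
  obtain ⟨hQlen, hTlen, hQv, hTv⟩ := key y hyPP'.1 hyPP'.2 hyx hyx'
  refine ⟨?_, hQlen, hTlen, hQv.trans hTv.symm⟩
  have hSeq : P.support.toFinset ∩ P'.support.toFinset = {x, x', y} := by
    apply Finset.Subset.antisymm
    · intro z hz
      have hz' : z ∈ P.support ∧ z ∈ P'.support := by
        rw [Finset.mem_inter, List.mem_toFinset, List.mem_toFinset] at hz
        exact hz
      rcases eq_or_ne z x with rfl | hzx
      · simp
      rcases eq_or_ne z x' with rfl | hzx'
      · simp
      obtain ⟨-, -, hz1, -⟩ := key z hz'.1 hz'.2 hzx hzx'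
      have hzy : z = y := by rw [← hz1]; exact hQv
      simp [hzy]
    · intro z hz
      simp only [Finset.mem_insert, Finset.mem_singleton] at hz
      rcases hz with rfl | rfl | rfl
      · exact hxS
      · exact hx'S
      · exact hyS
  rw [hSeq]
  rw [Finset.card_insert_of_notMem (by simp [hxx', Ne.symm hyx]),
    Finset.card_insert_of_notMem (by simp [Ne.symm hyx']), Finset.card_singleton]
end

section
/- Let k ≥ 3 and let W be an alternating r-closed trail (r ≥ 2) built from r paths P_0,…,P_{r−1} of length 2k−1 and r matching edges e_0,…,e_{r−1}, where e_i joins an end vertex of P_i to an end vertex of P_{i+1} (indices mod r). Suppose for every i, the edge e_i is not trapped in P_i e_i P_{i+1}, i.e., at least one of P_i e_i, e_i P_{i+1} is a path. Then W can be decomposed into r paths of lengths in {2k−1, 2k, 2k+1} such that every path of length 2k+1 has both of its end edges among the matching edges e_0,…,e_{r−1}; consequently each vertex of W is an end vertex of at most one path of length 2k+1 in the decomposition. -/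
open SimpleGraph

lemma countP_le_one_of_pairwise {α : Type*} (p : α → Bool) :
    ∀ (l : List α), l.Pairwise (fun x y => ¬(p x = true ∧ p y = true)) → l.countP p ≤ 1
  | [], _ => by simp
  | x :: l, h => by
    rcases List.pairwise_cons.mp h with ⟨hx, hl⟩
    rw [List.countP_cons]
    by_cases hp : p x = true
    · have h0 : l.countP p = 0 := by
        rw [List.countP_eq_zero]
        exact fun y hy hpy => hx y hy ⟨hp, hpy⟩
      simp [h0, hp]
    · simpa [hp] using countP_le_one_of_pairwise p l hl

lemma isPath_concat' {V : Type*} {G : SimpleGraph V} {u v w : V} {p : G.Walk u v}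
    (hp : p.IsPath) (h : G.Adj v w) (hw : w ∉ p.support) : (p.concat h).IsPath := by
  rw [Walk.isPath_def] at hp ⊢
  rw [Walk.support_concat, List.nodup_append]
  refine ⟨hp, List.nodup_singleton w, ?_⟩
  intro x hx y hy hxy
  rw [List.mem_singleton] at hy
  subst hy hxy
  exact hw hx

lemma getVert_concat_length {V : Type*} {G : SimpleGraph V} {u v w : V} (p : G.Walk u v)
    (h : G.Adj v w) : (p.concat h).getVert p.length = v := by
  rw [Walk.concat_eq_append, Walk.getVert_append]
  simp

/-- `x` is an internal vertex of the path/walk `P`. -/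
def IsInternalVertex {V : Type*} {G : SimpleGraph V} {u v : V}
    (P : G.Walk u v) (x : V) : Prop :=
  x ∈ P.support ∧ x ≠ u ∧ x ≠ v

/-- The union of the paths and matching edges of an alternating `r`-closed trail,
as a simple graph. -/
def trailGraph {V : Type*} (G : SimpleGraph V) {r : ℕ} (a b : ZMod r → V)
    (Pf : ∀ i : ZMod r, G.Walk (a i) (b i)) : SimpleGraph V :=
  SimpleGraph.fromEdgeSet
    ((⋃ i, {e | e ∈ (Pf i).edges}) ∪ Set.range (fun i => s(b i, a (i + 1))))

/-- Let `W` be an alternating `r`-closed trail (`r ≥ 2`) built from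
paths `P_i` of length `2k-1` and pairwise nonadjacent matching edges
`e_i = (b i)(a (i+1))`, such that no `e_i` is trapped in `P_i e_i P_{i+1}`.
Then `W` decomposes into `r` paths of lengths in `{2k-1, 2k, 2k+1}` such that
every path of length `2k+1` has both end edges among the matching edges;
consequently each vertex of `W` is an end vertex of at most one path of length
`2k+1` in the decomposition. -/
theorem stmt16 {V : Type*} [DecidableEq V] (k r : ℕ) (hk : 3 ≤ k) (hr : 2 ≤ r)
    (G : SimpleGraph V)
    (a b : ZMod r → V)
    (Pf : ∀ i : ZMod r, G.Walk (a i) (b i))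
    (hpath : ∀ i, (Pf i).IsPath ∧ (Pf i).length = 2 * k - 1)
    (hadj : ∀ i, G.Adj (b i) (a (i + 1)))
    (hmatching : ∀ i j, i ≠ j →
      ∀ x, x ∈ s(b i, a (i + 1)) → x ∉ s(b j, a (j + 1)))
    (hnotin : ∀ i j, s(b i, a (i + 1)) ∉ (Pf j).edges)
    (hdisj : ∀ i j, i ≠ j → ∀ e ∈ (Pf i).edges, e ∉ (Pf j).edges)
    (hnottrapped : ∀ i,
      ¬ (IsInternalVertex (Pf i) (a (i + 1)) ∧ IsInternalVertex (Pf (i + 1)) (b i))) :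
    ∃ D : List (Σ u : V, Σ v : V, (trailGraph G a b Pf).Walk u v),
      D.length = r ∧
      (∀ p ∈ D, p.2.2.IsPath ∧
        (p.2.2.length = 2 * k - 1 ∨ p.2.2.length = 2 * k ∨ p.2.2.length = 2 * k + 1)) ∧
      (∀ e, e ∈ (trailGraph G a b Pf).edgeSet ↔ ∃ p ∈ D, e ∈ p.2.2.edges) ∧
      D.Pairwise (fun p q => ∀ e ∈ p.2.2.edges, e ∉ q.2.2.edges) ∧
      (∀ p ∈ D, p.2.2.length = 2 * k + 1 →
        s(p.1, p.2.2.getVert 1) ∈ Set.range (fun i => s(b i, a (i + 1))) ∧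
        s(p.2.2.getVert (2 * k), p.2.1) ∈ Set.range (fun i => s(b i, a (i + 1)))) ∧
      (∀ v : V,
        D.countP (fun p => decide (p.2.2.length = 2 * k + 1 ∧ (p.1 = v ∨ p.2.1 = v))) ≤ 1) := by
  classical
  haveI : Fact (1 < r) := ⟨hr⟩
  haveI : NeZero r := ⟨by omega⟩
  have h1 : (1 : ZMod r) ≠ 0 := one_ne_zero
  have hsub : ∀ i : ZMod r, i - 1 + 1 = i := fun i => sub_add_cancel i 1
  have hne1 : ∀ i : ZMod r, i - 1 ≠ i := fun i h => h1 (sub_eq_self.mp h)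
  have hne1' : ∀ i : ZMod r, i ≠ i + 1 := fun i h => h1 (left_eq_add.mp h)
  have hsubinj : ∀ i j : ZMod r, i - 1 = j - 1 → i = j := fun i j h => by
    have := congrArg (· + 1) h; simpa [hsub] using this
  set H := trailGraph G a b Pf with hHdef
  -- basic vertex distinctness
  have hedge_ne : ∀ i j : ZMod r, i ≠ j → s(b i, a (i + 1)) ≠ s(b j, a (j + 1)) := by
    intro i j hij heq
    exact hmatching i j hij (b i) (by simp) (heq ▸ (by simp))
  have haa : ∀ i : ZMod r, a (i + 1) ≠ a i := by
    intro i h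
    refine hmatching i (i - 1) (hne1 i).symm (a (i + 1)) (by simp) ?_
    rw [hsub i, h]
    simp
  have hbb : ∀ i : ZMod r, b (i - 1) ≠ b i := by
    intro i h
    refine hmatching (i - 1) i (hne1 i) (b (i - 1)) (by simp) ?_
    rw [h]; simp
  have hba3 : ∀ i : ZMod r, b (i - 1) ≠ a (i + 1) := by
    intro i h
    refine hmatching (i - 1) i (hne1 i) (b (i - 1)) (by simp) ?_
    rw [h]; simp
  have hba4 : ∀ i : ZMod r, b (i - 1) ≠ a i := by
    intro i
    have := (hadj (i - 1)).ne
    rwa [hsub i] at this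
  -- not-trapped consequence
  have hBnot : ∀ i : ZMod r, a i ∈ (Pf (i - 1)).support → b (i - 1) ∉ (Pf i).support := by
    intro i
    have key : a ((i-1) + 1) ∈ (Pf (i-1)).support → b (i-1) ∉ (Pf ((i-1) + 1)).support := by
      intro hmem hcon
      refine hnottrapped (i - 1) ⟨⟨hmem, haa (i - 1), (hadj (i - 1)).ne'⟩,
        hcon, (hadj (i - 1)).ne, ?_⟩
      rw [hsub i]
      exact hbb i
    rwa [hsub i] at key
  -- edges of the paths lie in H
  have hPsub : ∀ i : ZMod r, ∀ e ∈ (Pf i).edges, e ∈ H.edgeSet := by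
    intro i e he
    rw [hHdef, trailGraph, SimpleGraph.edgeSet_fromEdgeSet]
    refine ⟨Or.inl (Set.mem_iUnion.mpr ⟨i, he⟩), ?_⟩
    have := (Pf i).edges_subset_edgeSet he
    exact fun hd => (G.not_isDiag_of_mem_edgeSet this) hd
  have hE : ∀ i : ZMod r, H.Adj (b i) (a (i + 1)) := by
    intro i
    rw [hHdef, trailGraph, SimpleGraph.fromEdgeSet_adj]
    exact ⟨Or.inr ⟨i, rfl⟩, (hadj i).ne⟩
  have hE' : ∀ i : ZMod r, H.Adj (b (i - 1)) (a i) := by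
    intro i
    have := hE (i - 1)
    rwa [hsub i] at this
  set P' : ∀ i : ZMod r, H.Walk (a i) (b i) := fun i => (Pf i).transfer H (hPsub i) with hP'def
  have hP'path : ∀ i, (P' i).IsPath := fun i => (hpath i).1.transfer _
  have hP'len : ∀ i, (P' i).length = 2 * k - 1 := fun i => by
    rw [hP'def]; rw [Walk.length_transfer]; exact (hpath i).2
  have hP'supp : ∀ i, (P' i).support = (Pf i).support := fun i => Walk.support_transfer _ _
  have hP'edges : ∀ i, (P' i).edges = (Pf i).edges := fun i => Walk.edges_transfer _ _
  -- the per-index path construction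
  have key : ∀ i : ZMod r, ∃ p : Σ u : V, Σ v : V, H.Walk u v,
      p.2.2.IsPath ∧
      (p.2.2.length = 2 * k - 1 ∨ p.2.2.length = 2 * k ∨ p.2.2.length = 2 * k + 1) ∧
      (∀ e, e ∈ p.2.2.edges ↔ (e ∈ (Pf i).edges ∨
        (a i ∈ (Pf (i - 1)).support ∧ e = s(b (i - 1), a i)) ∨
        (a (i + 1) ∉ (Pf i).support ∧ e = s(b i, a (i + 1))))) ∧
      (p.2.2.length = 2 * k + 1 →
        p.1 = b (i - 1) ∧ p.2.1 = a (i + 1) ∧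
        p.2.2.getVert 1 = a i ∧ p.2.2.getVert (2 * k) = b i) := by
    intro i
    by_cases hp : a i ∈ (Pf (i - 1)).support
    · by_cases hq : a (i + 1) ∈ (Pf i).support
      · refine ⟨⟨b (i - 1), b i, Walk.cons (hE' i) (P' i)⟩, ?_, ?_, ?_, ?_⟩
        · rw [Walk.cons_isPath_iff]
          exact ⟨hP'path i, by rw [hP'supp]; exact hBnot i hp⟩
        · right; left; rw [Walk.length_cons, hP'len]; omega
        · intro e
          simp only [Walk.edges_cons, List.mem_cons, hP'edges]
          constructor
          · rintro (rfl | he)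
            · exact Or.inr (Or.inl ⟨hp, rfl⟩)
            · exact Or.inl he
          · rintro (he | ⟨-, rfl⟩ | ⟨hq', -⟩)
            · exact Or.inr he
            · exact Or.inl rfl
            · exact absurd hq hq'
        · intro hlen
          exfalso
          rw [Walk.length_cons, hP'len] at hlen; omega
      · refine ⟨⟨b (i - 1), a (i + 1), Walk.cons (hE' i) ((P' i).concat (hE i))⟩, ?_, ?_, ?_, ?_⟩
        · rw [Walk.cons_isPath_iff]
          refine ⟨isPath_concat' (hP'path i) (hE i) (by rw [hP'supp]; exact hq), ?_⟩
          rw [Walk.support_concat, List.mem_append, hP'supp]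
          rintro (h | h)
          · exact hBnot i hp h
          · rw [List.mem_singleton] at h
            exact hba3 i h
        · right; right; rw [Walk.length_cons, Walk.length_concat, hP'len]; omega
        · intro e
          simp only [Walk.edges_cons, Walk.edges_concat, List.concat_eq_append,
            List.mem_cons, List.mem_append, List.mem_singleton, List.not_mem_nil,
            or_false, hP'edges]
          constructor
          · rintro (rfl | he | rfl)
            · exact Or.inr (Or.inl ⟨hp, rfl⟩)
            · exact Or.inl he
            · exact Or.inr (Or.inr ⟨hq, rfl⟩)
          · rintro (he | ⟨-, rfl⟩ | ⟨-, rfl⟩)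
            · exact Or.inr (Or.inl he)
            · exact Or.inl rfl
            · exact Or.inr (Or.inr rfl)
        · intro _
          refine ⟨rfl, rfl, ?_, ?_⟩
          · rw [show (1 : ℕ) = 0 + 1 from rfl, Walk.getVert_cons_succ]
            simp
          · rw [show 2 * k = (2 * k - 1) + 1 by omega, Walk.getVert_cons_succ,
              ← hP'len i, getVert_concat_length]
    · by_cases hq : a (i + 1) ∈ (Pf i).support
      · refine ⟨⟨a i, b i, P' i⟩, hP'path i, Or.inl (hP'len i), ?_, ?_⟩
        · intro e
          rw [hP'edges]
          constructor
          · exact Or.inl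
          · rintro (he | ⟨hp', -⟩ | ⟨hq', -⟩)
            · exact he
            · exact absurd hp' hp
            · exact absurd hq hq'
        · intro hlen
          exfalso
          rw [hP'len] at hlen; omega
      · refine ⟨⟨a i, a (i + 1), (P' i).concat (hE i)⟩, ?_, ?_, ?_, ?_⟩
        · exact isPath_concat' (hP'path i) (hE i) (by rw [hP'supp]; exact hq)
        · right; left; rw [Walk.length_concat, hP'len]; omega
        · intro e
          simp only [Walk.edges_concat, List.concat_eq_append, List.mem_append,
            List.mem_singleton, List.not_mem_nil, or_false, List.mem_cons, hP'edges]
          constructor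
          · rintro (he | rfl)
            · exact Or.inl he
            · exact Or.inr (Or.inr ⟨hq, rfl⟩)
          · rintro (he | ⟨hp', -⟩ | ⟨-, rfl⟩)
            · exact Or.inl he
            · exact absurd hp' hp
            · exact Or.inr rfl
        · intro hlen
          exfalso
          rw [Walk.length_concat, hP'len] at hlen; omega
  choose Q hQpath hQlen hQedges hQlong using key
  -- edge-disjointness of the Q's
  have hQdisj : ∀ i j : ZMod r, i ≠ j → ∀ e ∈ (Q i).2.2.edges, e ∉ (Q j).2.2.edges := by
    intro i j hij e hei hej
    rw [hQedges i] at hei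
    rw [hQedges j] at hej
    rcases hei with hei | ⟨hpi, rfl⟩ | ⟨hqi, rfl⟩
    · rcases hej with hej | ⟨hpj, hej⟩ | ⟨hqj, hej⟩
      · exact hdisj i j hij e hei hej
      · subst hej
        have := hnotin (j - 1) i
        rw [hsub j] at this
        exact this hei
      · exact hnotin j i (hej ▸ hei)
    · rcases hej with hej | ⟨hpj, hej⟩ | ⟨hqj, hej⟩
      · have := hnotin (i - 1) j
        rw [hsub i] at this
        exact this hej
      · -- e_{i-1} = e_{j-1}
        have hne : i - 1 ≠ j - 1 := fun h => hij (hsubinj i j h)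
        have := hedge_ne (i - 1) (j - 1) hne
        rw [hsub i, hsub j] at this
        exact this hej
      · -- e_{i-1} = e_j
        by_cases h : i - 1 = j
        · subst h
          rw [hsub i] at hqj
          exact hqj hpi
        · have := hedge_ne (i - 1) j h
          rw [hsub i] at this
          exact this hej
    · rcases hej with hej | ⟨hpj, hej⟩ | ⟨hqj, hej⟩
      · exact hnotin i j hej
      · by_cases h : j - 1 = i
        · subst h
          rw [hsub j] at hqi
          exact hqi hpj
        · have := hedge_ne (j - 1) i h
          rw [hsub j] at this
          exact this.symm hej
      · exact hedge_ne i j hij hej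
  -- long-path end data
  have hQv : ∀ i : ZMod r, (Q i).2.2.length = 2 * k + 1 →
      ((Q i).1 = b (i - 1) ∧ (Q i).2.1 = a (i + 1)) := by
    intro i h
    exact ⟨(hQlong i h).1, (hQlong i h).2.1⟩
  have hpw : (List.range r).Pairwise (fun m n : ℕ => ((m : ZMod r) ≠ (n : ZMod r))) := by
    rw [List.pairwise_iff_getElem]
    intro m n hm hn hmn
    rw [List.length_range] at hm hn
    simp only [List.getElem_range]
    intro h
    have hmv : ((m : ℕ) : ZMod r).val = m := ZMod.val_cast_of_lt hm
    have hnv : ((n : ℕ) : ZMod r).val = n := ZMod.val_cast_of_lt hn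
    rw [h] at hmv
    omega
  have hmemD : ∀ i : ZMod r, Q i ∈ (List.range r).map (fun n : ℕ => Q ((n : ℕ) : ZMod r)) := by
    intro i
    have h : Q i = Q (((i.val : ℕ) : ZMod r)) :=
      congrArg Q (ZMod.natCast_rightInverse i).symm
    rw [h]
    exact List.mem_map_of_mem (List.mem_range.mpr (ZMod.val_lt i))
  have hpred : ∀ (v : V) (i j : ZMod r), i ≠ j →
      ¬(((Q i).2.2.length = 2 * k + 1 ∧ ((Q i).1 = v ∨ (Q i).2.1 = v)) ∧
        ((Q j).2.2.length = 2 * k + 1 ∧ ((Q j).1 = v ∨ (Q j).2.1 = v))) := by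
    rintro v i j hij ⟨⟨hlm, hvm⟩, ⟨hln, hvn⟩⟩
    obtain ⟨em1, em2⟩ := hQv _ hlm
    obtain ⟨en1, en2⟩ := hQv _ hln
    replace hvm : b (i - 1) = v ∨ a (i + 1) = v := by
      rcases hvm with hvm | hvm
      · exact Or.inl (em1.symm.trans hvm)
      · exact Or.inr (em2.symm.trans hvm)
    replace hvn : b (j - 1) = v ∨ a (j + 1) = v := by
      rcases hvn with hvn | hvn
      · exact Or.inl (en1.symm.trans hvn)
      · exact Or.inr (en2.symm.trans hvn)
    rcases hvm with hvm | hvm <;> rcases hvn with hvn | hvn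
    · have hne : i - 1 ≠ j - 1 := fun h => hij (hsubinj i j h)
      refine hmatching (i - 1) (j - 1) hne (b (i - 1)) (by simp) ?_
      rw [hsub j, hvm, ← hvn]
      simp
    · by_cases h : i - 1 = j
      · exact (hadj j).ne ((congrArg b h).symm.trans (hvm.trans hvn.symm))
      · refine hmatching (i - 1) j h (b (i - 1)) (by simp) ?_
        rw [hvm, ← hvn]
        simp
    · by_cases h : j - 1 = i
      · exact (hadj i).ne ((congrArg b h).symm.trans (hvn.trans hvm.symm))
      · refine hmatching (j - 1) i h (b (j - 1)) (by simp) ?_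
        rw [hvn, ← hvm]
        simp
    · refine hmatching i j hij (a (i + 1)) (by simp) ?_
      rw [hvm, ← hvn]
      simp
  refine ⟨(List.range r).map (fun n : ℕ => Q ((n : ℕ) : ZMod r)),
    by rw [List.length_map, List.length_range], ?_, ?_, ?_, ?_, ?_⟩
  · rintro p hp
    obtain ⟨n, -, rfl⟩ := List.mem_map.mp hp
    exact ⟨hQpath _, hQlen _⟩
  · intro e
    constructor
    · intro he
      rw [hHdef, trailGraph, SimpleGraph.edgeSet_fromEdgeSet] at he
      obtain ⟨hmem, -⟩ := he
      rcases hmem with hmem | ⟨j, rfl⟩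
      · rw [Set.mem_iUnion] at hmem
        obtain ⟨i, hi⟩ := hmem
        refine ⟨Q i, hmemD i, ?_⟩
        rw [hQedges i]
        exact Or.inl hi
      · by_cases hq : a (j + 1) ∈ (Pf j).support
        · refine ⟨Q (j + 1), hmemD (j + 1), ?_⟩
          rw [hQedges (j + 1)]
          refine Or.inr (Or.inl ?_)
          rw [add_sub_cancel_right]
          exact ⟨hq, rfl⟩
        · refine ⟨Q j, hmemD j, ?_⟩
          rw [hQedges j]
          exact Or.inr (Or.inr ⟨hq, rfl⟩)
    · rintro ⟨p, hp, he⟩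
      obtain ⟨n, -, rfl⟩ := List.mem_map.mp hp
      exact (Q ((n : ℕ) : ZMod r)).2.2.edges_subset_edgeSet he
  · rw [List.pairwise_map]
    exact hpw.imp (fun h => hQdisj _ _ h)
  · rintro p hp hlen
    obtain ⟨n, -, rfl⟩ := List.mem_map.mp hp
    obtain ⟨h1', h2', h3', h4'⟩ := hQlong _ hlen
    constructor
    · refine ⟨((n : ℕ) : ZMod r) - 1, ?_⟩
      show s(b (((n : ℕ) : ZMod r) - 1), a (((n : ℕ) : ZMod r) - 1 + 1)) = _
      rw [hsub]
      exact congrArg₂ (fun u w : V => s(u, w)) h1'.symm h3'.symm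
    · refine ⟨((n : ℕ) : ZMod r), ?_⟩
      show s(b ((n : ℕ) : ZMod r), a (((n : ℕ) : ZMod r) + 1)) = _
      exact congrArg₂ (fun u w : V => s(u, w)) h4'.symm h2'.symm
  · intro v
    apply countP_le_one_of_pairwise
    rw [List.pairwise_map]
    refine hpw.imp ?_
    intro m n hmn
    rintro ⟨hm', hn'⟩
    rw [decide_eq_true_iff] at hm' hn'
    exact hpred v _ _ hmn ⟨hm', hn'⟩
end
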